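/- arXiv:1605.03401 — 2 statements merged into one kernel-verified Lean document; each statement's English description precedes it below -/
import Mathlib

section
/- Let α ∈ (0,1), θ > -α, (Y_j) independent with Y_j ∼ Beta(1-α, θ+jα), and S_n = Σ_{j=1}^n Y_j^α j^{α-1}. Then there exists a random variable S_∞ such that S_n - Ψ_α log n → S_∞ almost surely as n → ∞, where Ψ_α = α^{-α} Γ(1-α)^{-1}. -/
open MeasureTheory ProbabilityTheory Filter Topology

/-- The Beta(a,b) distribution on `ℝ`, supported on `(0,1)`, with density
`Γ(a+b)/(Γ(a)Γ(b)) x^{a-1}(1-x)^{b-1}`. -/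
noncomputable def betaMeasure (a b : ℝ) : Measure ℝ :=
  (MeasureTheory.volume.restrict (Set.Ioo (0:ℝ) 1)).withDensity fun x =>
    ENNReal.ofReal (Real.Gamma (a + b) / (Real.Gamma a * Real.Gamma b) *
      x ^ (a - 1) * (1 - x) ^ (b - 1))

/-- `(Y j)_{j ≥ 1}` are independent with `Y j ∼ Beta(1-α, θ+jα)` (the stick-breaking
variables of the `PD(α,θ)` distribution). -/
def IsStickBreaking {Ω : Type*} [MeasureSpace Ω] (α θ : ℝ) (Y : ℕ → Ω → ℝ) : Prop :=
  (∀ j, Measurable (Y j)) ∧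
    iIndepFun Y ℙ ∧
      ∀ j : ℕ, 1 ≤ j → Measure.map (Y j) ℙ = _root_.betaMeasure (1 - α) (θ + j * α)

/-- `M n = ∏_{i=1}^n (1 - Y i)` (so `M 0 = 1`). -/
noncomputable def Mstick {Ω : Type*} (Y : ℕ → Ω → ℝ) (n : ℕ) (ω : Ω) : ℝ :=
  ∏ i ∈ Finset.Icc 1 n, (1 - Y i ω)

/-- `S n = Σ_{j=1}^n Y_j^α j^{α-1}`. -/
noncomputable def Ssum {Ω : Type*} (α : ℝ) (Y : ℕ → Ω → ℝ) (n : ℕ) (ω : Ω) : ℝ :=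
  ∑ j ∈ Finset.Icc 1 n, Y j ω ^ α * (j : ℝ) ^ (α - 1)

section Aux

private lemma measurable_rpow_const' (c : ℝ) : Measurable fun x : ℝ => x ^ c := by
  measurability

private lemma gamma_upper {x s : ℝ} (hx : 0 < x) (hs0 : 0 ≤ s) (hs1 : s ≤ 1) :
    Real.Gamma (x + s) ≤ Real.Gamma x * x ^ s := by
  have h := Real.convexOn_log_Gamma.2 (Set.mem_Ioi.2 hx)
    (Set.mem_Ioi.2 (by linarith : (0:ℝ) < x + 1)) (by linarith : (0:ℝ) ≤ 1 - s) hs0 (by ring)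
  simp only [Function.comp, smul_eq_mul] at h
  have hxs : (1 - s) * x + s * (x + 1) = x + s := by ring
  rw [hxs] at h
  have e1 : (1 - s) * Real.log (Real.Gamma x) + s * Real.log (Real.Gamma (x + 1))
      = Real.log (Real.Gamma x) + s * Real.log x := by
    rw [Real.Gamma_add_one hx.ne', Real.log_mul hx.ne' (Real.Gamma_pos_of_pos hx).ne']
    ring
  rw [e1] at h
  calc Real.Gamma (x + s) = Real.exp (Real.log (Real.Gamma (x + s))) :=
        (Real.exp_log (Real.Gamma_pos_of_pos (by linarith))).symm
    _ ≤ Real.exp (Real.log (Real.Gamma x) + s * Real.log x) := Real.exp_le_exp.2 h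
    _ = Real.Gamma x * x ^ s := by
        rw [Real.exp_add, Real.exp_log (Real.Gamma_pos_of_pos hx),
          Real.rpow_def_of_pos hx, mul_comm (Real.log x) s]

private lemma gamma_lower {x s : ℝ} (hx : 0 < x) (hs0 : 0 ≤ s) (hs1 : s ≤ 1) :
    Real.Gamma x * x ≤ Real.Gamma (x + s) * (x + s) ^ (1 - s) := by
  have hxs : (0:ℝ) < x + s := by linarith
  have h := Real.convexOn_log_Gamma.2 (Set.mem_Ioi.2 hxs)
    (Set.mem_Ioi.2 (by linarith : (0:ℝ) < x + 1 + s)) hs0 (by linarith : (0:ℝ) ≤ 1 - s) (by ring)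
  simp only [Function.comp, smul_eq_mul] at h
  have hpt : s * (x + s) + (1 - s) * (x + 1 + s) = x + 1 := by ring
  rw [hpt] at h
  have e2 : Real.Gamma (x + 1 + s) = (x + s) * Real.Gamma (x + s) := by
    have : x + 1 + s = (x + s) + 1 := by ring
    rw [this, Real.Gamma_add_one hxs.ne']
  have e1 : s * Real.log (Real.Gamma (x + s)) + (1 - s) * Real.log (Real.Gamma (x + 1 + s))
      = Real.log (Real.Gamma (x + s)) + (1 - s) * Real.log (x + s) := by
    rw [e2, Real.log_mul hxs.ne' (Real.Gamma_pos_of_pos hxs).ne']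
    ring
  rw [e1, Real.Gamma_add_one hx.ne',
    Real.log_mul hx.ne' (Real.Gamma_pos_of_pos hx).ne'] at h
  calc Real.Gamma x * x = Real.exp (Real.log x + Real.log (Real.Gamma x)) := by
        rw [Real.exp_add, Real.exp_log hx, Real.exp_log (Real.Gamma_pos_of_pos hx)]; ring
    _ ≤ Real.exp (Real.log (Real.Gamma (x + s)) + (1 - s) * Real.log (x + s)) :=
        Real.exp_le_exp.2 h
    _ = Real.Gamma (x + s) * (x + s) ^ (1 - s) := by
        rw [Real.exp_add, Real.exp_log (Real.Gamma_pos_of_pos hxs),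
          Real.rpow_def_of_pos hxs, mul_comm (Real.log (x + s)) (1 - s)]

private lemma ratio_lower {x s : ℝ} (hx : 0 < x) (hs0 : 0 ≤ s) (hs1 : s ≤ 1) :
    x ^ (-s) ≤ Real.Gamma x / Real.Gamma (x + s) := by
  have hG : 0 < Real.Gamma (x + s) := Real.Gamma_pos_of_pos (by linarith)
  rw [le_div_iff₀ hG, Real.rpow_neg hx.le, inv_mul_le_iff₀ (Real.rpow_pos_of_pos hx s)]
  calc Real.Gamma (x + s) ≤ Real.Gamma x * x ^ s := gamma_upper hx hs0 hs1
    _ = x ^ s * Real.Gamma x := mul_comm _ _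

private lemma ratio_upper {x s : ℝ} (hx : 0 < x) (hs0 : 0 ≤ s) (hs1 : s ≤ 1) :
    Real.Gamma x / Real.Gamma (x + s) ≤ (1 + s / x) * x ^ (-s) := by
  have hxs : (0:ℝ) < x + s := by linarith
  have hG : 0 < Real.Gamma (x + s) := Real.Gamma_pos_of_pos hxs
  have h1 : Real.Gamma x / Real.Gamma (x + s) ≤ (x + s) ^ (1 - s) / x := by
    rw [div_le_div_iff₀ hG hx]
    calc Real.Gamma x * x ≤ Real.Gamma (x + s) * (x + s) ^ (1 - s) := gamma_lower hx hs0 hs1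
      _ = (x + s) ^ (1 - s) * Real.Gamma (x + s) := mul_comm _ _
  refine h1.trans ?_
  have h2 : (x + s) ^ (1 - s) ≤ (x + s) * x ^ (-s) := by
    have : (x + s) ^ (1 - s) = (x + s) * (x + s) ^ (-s) := by
      rw [show (1 : ℝ) - s = 1 + (-s) by ring, Real.rpow_add hxs, Real.rpow_one]
    rw [this]
    exact mul_le_mul_of_nonneg_left
      (Real.rpow_le_rpow_of_nonpos hx (by linarith) (by linarith)) hxs.le
  calc (x + s) ^ (1 - s) / x ≤ (x + s) * x ^ (-s) / x := by
        rw [div_eq_mul_inv, div_eq_mul_inv]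
        exact mul_le_mul_of_nonneg_right h2 (inv_nonneg.2 hx.le)
    _ = (1 + s / x) * x ^ (-s) := by field_simp

private lemma rpow_neg_diff {m a b s : ℝ} (hm : 0 < m) (ha : m ≤ a) (hb : m ≤ b)
    (hs0 : 0 ≤ s) (hs1 : s ≤ 1) :
    |a ^ (-s) - b ^ (-s)| ≤ m ^ (-s) * m⁻¹ * |a - b| := by
  rcases le_total b a with hba | hab
  · have hb0 : (0:ℝ) < b := hm.trans_le hb
    have ha0 : (0:ℝ) < a := hm.trans_le ha
    have hdle : a ^ (-s) ≤ b ^ (-s) := Real.rpow_le_rpow_of_nonpos hb0 hba (neg_nonpos.2 hs0)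
    rw [abs_of_nonpos (by linarith), abs_of_nonneg (by linarith), neg_sub]
    have hfact : b ^ (-s) - a ^ (-s) = b ^ (-s) * (1 - (b / a) ^ s) := by
      rw [Real.div_rpow hb0.le ha0.le, mul_sub, mul_one]
      rw [Real.rpow_neg hb0.le, Real.rpow_neg ha0.le]
      field_simp
    rw [hfact]
    have h1 : (b / a) ≤ (b / a) ^ s := by
      have := Real.rpow_le_rpow_of_exponent_ge (div_pos hb0 ha0)
        ((div_le_one ha0).2 hba) hs1
      simpa using this
    have h2 : 1 - (b / a) ^ s ≤ (a - b) / a := by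
      have : 1 - b / a = (a - b) / a := by field_simp
      linarith
    have h3 : b ^ (-s) ≤ m ^ (-s) := Real.rpow_le_rpow_of_nonpos hm hb (neg_nonpos.2 hs0)
    have h4 : (a - b) / a ≤ (a - b) / m := by
      apply div_le_div_of_nonneg_left (by linarith) hm ha
    have h5 : (0:ℝ) ≤ 1 - (b / a) ^ s := by
      have : (b / a) ^ s ≤ 1 := Real.rpow_le_one (by positivity) ((div_le_one ha0).2 hba) hs0
      linarith
    calc b ^ (-s) * (1 - (b / a) ^ s) ≤ m ^ (-s) * ((a - b) / m) :=
          mul_le_mul h3 (h2.trans h4) h5 (by positivity)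
      _ = m ^ (-s) * m⁻¹ * (a - b) := by ring
  · have ha0 : (0:ℝ) < a := hm.trans_le ha
    have hb0 : (0:ℝ) < b := hm.trans_le hb
    have hdle : b ^ (-s) ≤ a ^ (-s) := Real.rpow_le_rpow_of_nonpos ha0 hab (neg_nonpos.2 hs0)
    rw [abs_of_nonneg (by linarith), abs_of_nonpos (by linarith), neg_sub]
    have hfact : a ^ (-s) - b ^ (-s) = a ^ (-s) * (1 - (a / b) ^ s) := by
      rw [Real.div_rpow ha0.le hb0.le, mul_sub, mul_one]
      rw [Real.rpow_neg hb0.le, Real.rpow_neg ha0.le]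
      field_simp
    rw [hfact]
    have h1 : (a / b) ≤ (a / b) ^ s := by
      have := Real.rpow_le_rpow_of_exponent_ge (div_pos ha0 hb0)
        ((div_le_one hb0).2 hab) hs1
      simpa using this
    have h2 : 1 - (a / b) ^ s ≤ (b - a) / b := by
      have : 1 - a / b = (b - a) / b := by field_simp
      linarith
    have h3 : a ^ (-s) ≤ m ^ (-s) := Real.rpow_le_rpow_of_nonpos hm ha (neg_nonpos.2 hs0)
    have h4 : (b - a) / b ≤ (b - a) / m := by
      apply div_le_div_of_nonneg_left (by linarith) hm hb
    have h5 : (0:ℝ) ≤ 1 - (a / b) ^ s := by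
      have : (a / b) ^ s ≤ 1 := Real.rpow_le_one (by positivity) ((div_le_one hb0).2 hab) hs0
      linarith
    calc a ^ (-s) * (1 - (a / b) ^ s) ≤ m ^ (-s) * ((b - a) / m) :=
          mul_le_mul h3 (h2.trans h4) h5 (by positivity)
      _ = m ^ (-s) * m⁻¹ * (b - a) := by ring

private lemma betaIntegral_real {a b : ℝ} (ha : 0 < a) (hb : 0 < b) :
    ∫ x in Set.Ioo (0:ℝ) 1, x ^ (a - 1) * (1 - x) ^ (b - 1)
      = Real.Gamma a * Real.Gamma b / Real.Gamma (a + b) := by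
  have h := Complex.Gamma_mul_Gamma_eq_betaIntegral (s := (a:ℂ)) (t := (b:ℂ))
    (by simpa using ha) (by simpa using hb)
  have hIoo : Complex.betaIntegral (a:ℂ) (b:ℂ)
      = ((∫ x in Set.Ioo (0:ℝ) 1, x ^ (a - 1) * (1 - x) ^ (b - 1) : ℝ) : ℂ) := by
    rw [Complex.betaIntegral, intervalIntegral.integral_of_le zero_le_one,
      MeasureTheory.integral_Ioc_eq_integral_Ioo]
    calc ∫ t in Set.Ioo (0:ℝ) 1, (t:ℂ) ^ ((a:ℂ) - 1) * (1 - (t:ℂ)) ^ ((b:ℂ) - 1)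
        = ∫ t in Set.Ioo (0:ℝ) 1, ((t ^ (a - 1) * (1 - t) ^ (b - 1) : ℝ) : ℂ) := by
          apply setIntegral_congr_fun measurableSet_Ioo
          intro t ht
          obtain ⟨ht0, ht1⟩ := ht
          dsimp only
          rw [show ((a:ℂ) - 1) = ((a - 1 : ℝ) : ℂ) by push_cast; ring,
            show ((b:ℂ) - 1) = ((b - 1 : ℝ) : ℂ) by push_cast; ring,
            show (1 - (t:ℂ)) = ((1 - t : ℝ) : ℂ) by push_cast; ring,
            ← Complex.ofReal_cpow ht0.le, ← Complex.ofReal_cpow (by linarith),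
            ← Complex.ofReal_mul]
      _ = ((∫ x in Set.Ioo (0:ℝ) 1, x ^ (a - 1) * (1 - x) ^ (b - 1) : ℝ) : ℂ) :=
          integral_ofReal
  rw [hIoo, Complex.Gamma_ofReal, Complex.Gamma_ofReal, ← Complex.ofReal_add,
    Complex.Gamma_ofReal, ← Complex.ofReal_mul, ← Complex.ofReal_mul] at h
  have h' := Complex.ofReal_inj.1 h
  have hG : Real.Gamma (a + b) ≠ 0 := (Real.Gamma_pos_of_pos (by linarith)).ne'
  field_simp at h' ⊢
  linarith [h']

private lemma betaMoment {a b : ℝ} (s : ℝ) (ha : 0 < a) (hb : 0 < b) (hs : 0 ≤ s) :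
    ∫ x, x ^ s ∂(_root_.betaMeasure a b)
      = Real.Gamma (a + s) * Real.Gamma (a + b) / (Real.Gamma a * Real.Gamma (a + b + s)) := by
  have hGa := Real.Gamma_pos_of_pos ha
  have hGb := Real.Gamma_pos_of_pos hb
  have hGab := Real.Gamma_pos_of_pos (show (0:ℝ) < a + b by linarith)
  have hGas := Real.Gamma_pos_of_pos (show (0:ℝ) < a + s by linarith)
  have hGabs := Real.Gamma_pos_of_pos (show (0:ℝ) < a + b + s by linarith)
  set c := Real.Gamma (a + b) / (Real.Gamma a * Real.Gamma b) with hc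
  have hc0 : 0 < c := div_pos hGab (mul_pos hGa hGb)
  have hmeas : Measurable fun x : ℝ => (c * x ^ (a - 1) * (1 - x) ^ (b - 1)).toNNReal := by
    apply Measurable.real_toNNReal
    exact ((measurable_const.mul (measurable_rpow_const' (a - 1))).mul
      ((measurable_rpow_const' (b - 1)).comp (measurable_const.sub measurable_id)))
  have key : ∫ x, x ^ s ∂(_root_.betaMeasure a b)
      = ∫ x in Set.Ioo (0:ℝ) 1, (c * x ^ (a - 1) * (1 - x) ^ (b - 1)).toNNReal • (x ^ s) := by
    rw [_root_.betaMeasure]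
    exact integral_withDensity_eq_integral_smul hmeas _
  rw [key]
  have congr1 : ∫ x in Set.Ioo (0:ℝ) 1, (c * x ^ (a - 1) * (1 - x) ^ (b - 1)).toNNReal • (x ^ s)
      = ∫ x in Set.Ioo (0:ℝ) 1, c * (x ^ (a + s - 1) * (1 - x) ^ (b - 1)) := by
    apply setIntegral_congr_fun measurableSet_Ioo
    intro t ht
    obtain ⟨ht0, ht1⟩ := ht
    dsimp only
    have hnn : 0 ≤ c * t ^ (a - 1) * (1 - t) ^ (b - 1) := by
      have := Real.rpow_nonneg ht0.le (a - 1)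
      have := Real.rpow_nonneg (show (0:ℝ) ≤ 1 - t by linarith) (b - 1)
      positivity
    rw [NNReal.smul_def, smul_eq_mul, Real.coe_toNNReal _ hnn]
    have : t ^ (a - 1) * t ^ s = t ^ (a + s - 1) := by
      rw [← Real.rpow_add ht0]; ring_nf
    rw [← this]; ring
  rw [congr1, integral_const_mul, betaIntegral_real (by linarith : (0:ℝ) < a + s) hb]
  have : a + s + b = a + b + s := by ring
  rw [this, hc]
  field_simp

private lemma betaMeasure_compl_Ioo (a b : ℝ) : _root_.betaMeasure a b (Set.Ioo (0:ℝ) 1)ᶜ = 0 := by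
  rw [_root_.betaMeasure, withDensity_apply _ measurableSet_Ioo.compl,
    Measure.restrict_restrict measurableSet_Ioo.compl]
  simp [Set.compl_inter_self]

private lemma Y_rpow_integral {Ω : Type*} [MeasureSpace Ω] [IsProbabilityMeasure (ℙ : Measure Ω)]
    {Yj : Ω → ℝ} {a b : ℝ} (hYm : Measurable Yj) (hlaw : Measure.map Yj ℙ = _root_.betaMeasure a b)
    (ha : 0 < a) (hb : 0 < b) (s : ℝ) (hs : 0 ≤ s) :
    ∫ ω, Yj ω ^ s ∂ℙ
      = Real.Gamma (a + s) * Real.Gamma (a + b) / (Real.Gamma a * Real.Gamma (a + b + s)) := by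
  rw [← betaMoment s ha hb hs, ← hlaw,
    integral_map hYm.aemeasurable (measurable_rpow_const' s).aestronglyMeasurable]

private lemma Y_ae_Ioo {Ω : Type*} [MeasureSpace Ω] [IsProbabilityMeasure (ℙ : Measure Ω)]
    {Yj : Ω → ℝ} {a b : ℝ} (hYm : Measurable Yj) (hlaw : Measure.map Yj ℙ = _root_.betaMeasure a b) :
    ∀ᵐ ω ∂ℙ, Yj ω ∈ Set.Ioo (0:ℝ) 1 := by
  have h0 : ℙ (Yj ⁻¹' (Set.Ioo (0:ℝ) 1)ᶜ) = 0 := by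
    rw [← Measure.map_apply hYm measurableSet_Ioo.compl, hlaw]
    exact betaMeasure_compl_Ioo a b
  rw [ae_iff]
  exact h0

end Aux

set_option maxHeartbeats 2000000 in
/-- `S_n - Ψ_α log n` converges almost surely, where
`Ψ_α = α^{-α} Γ(1-α)^{-1}`. -/
theorem stmt7 {Ω : Type*} [MeasureSpace Ω] [IsProbabilityMeasure (ℙ : Measure Ω)]
    (α θ : ℝ) (hα : α ∈ Set.Ioo (0:ℝ) 1) (hθ : -α < θ)
    (Y : ℕ → Ω → ℝ) (hY : IsStickBreaking α θ Y) :
    ∃ Sinf : Ω → ℝ, ∀ᵐ ω ∂ℙ,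
      Tendsto (fun n : ℕ => Ssum α Y n ω - α ^ (-α) * (Real.Gamma (1 - α))⁻¹ * Real.log n)
        atTop (𝓝 (Sinf ω)) := by
  classical
  obtain ⟨hα0, hα1⟩ := hα
  obtain ⟨hmeas, hindep, hlaw⟩ := hY
  have h1α : (0:ℝ) < 1 - α := by linarith
  have hΓ : 0 < Real.Gamma (1 - α) := Real.Gamma_pos_of_pos h1α
  set Ψ : ℝ := α ^ (-α) * (Real.Gamma (1 - α))⁻¹ with hΨdef
  have hΨ0 : 0 < Ψ := mul_pos (Real.rpow_pos_of_pos hα0 _) (inv_pos.2 hΓ)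
  set κ : ℝ := min α (θ + 1) with hκdef
  have hκ0 : 0 < κ := lt_min hα0 (by linarith)
  have hκα : κ ≤ α := min_le_left _ _
  have hbpos : ∀ j : ℕ, 1 ≤ j → (0:ℝ) < θ + j * α := by
    intro j hj
    have hj1 : (1:ℝ) ≤ (j:ℝ) := by exact_mod_cast hj
    nlinarith
  have hxpos : ∀ j : ℕ, 1 ≤ j → (0:ℝ) < (1 - α) + (θ + j * α) := by
    intro j hj; have := hbpos j hj; linarith
  have hxκj : ∀ j : ℕ, 1 ≤ j → κ * j ≤ (1 - α) + (θ + j * α) := by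
    intro j hj
    have hj1 : (1:ℝ) ≤ (j:ℝ) := by exact_mod_cast hj
    rcases le_total α (θ + 1) with h | h
    · have hk : κ = α := min_eq_left h
      rw [hk]; nlinarith
    · have hk : κ = θ + 1 := min_eq_right h
      rw [hk]; nlinarith
  have hxκ : ∀ j : ℕ, 1 ≤ j → κ ≤ (1 - α) + (θ + j * α) := by
    intro j hj
    have hj1 : (1:ℝ) ≤ (j:ℝ) := by exact_mod_cast hj
    have := hxκj j hj
    nlinarith
  -- the summands
  set Z : ℕ → Ω → ℝ := fun j ω => Y j ω ^ α * (j : ℝ) ^ (α - 1) with hZdef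
  have hSsum : ∀ (n : ℕ) (ω : Ω), Ssum α Y n ω = ∑ j ∈ Finset.Ioc 0 n, Z j ω := by
    intro n ω
    rw [Ssum, ← Finset.Icc_add_one_left_eq_Ioc]
    rfl
  have hZmeas : ∀ j, Measurable (Z j) :=
    fun j => ((measurable_rpow_const' α).comp (hmeas j)).mul_const _
  have hYIoo : ∀ᵐ ω ∂ℙ, ∀ j, 1 ≤ j → Y j ω ∈ Set.Ioo (0:ℝ) 1 := by
    rw [ae_all_iff]
    intro j
    by_cases hj : 1 ≤ j
    · filter_upwards [Y_ae_Ioo (hmeas j) (hlaw j hj)] with ω h _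
      exact h
    · filter_upwards with ω h
      exact absurd h hj
  have hZnn : ∀ (j : ℕ), 1 ≤ j → ∀ (ω : Ω), Y j ω ∈ Set.Ioo (0:ℝ) 1 → Z j ω ∈ Set.Icc (0:ℝ) 1 := by
    intro j hj ω hω
    have hj1 : (1:ℝ) ≤ (j:ℝ) := by exact_mod_cast hj
    have h1 : 0 ≤ Y j ω ^ α := Real.rpow_nonneg hω.1.le _
    have h2 : Y j ω ^ α ≤ 1 := Real.rpow_le_one hω.1.le hω.2.le hα0.le
    have h3 : 0 ≤ (j:ℝ) ^ (α - 1) := Real.rpow_nonneg (by linarith) _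
    have h4 : (j:ℝ) ^ (α - 1) ≤ 1 :=
      Real.rpow_le_one_of_one_le_of_nonpos hj1 (by linarith)
    exact ⟨mul_nonneg h1 h3, mul_le_one₀ h2 h3 h4⟩
  have hZLp : ∀ j, 1 ≤ j → MemLp (Z j) 2 ℙ := by
    intro j hj
    apply MemLp.of_bound (hZmeas j).aestronglyMeasurable 1
    filter_upwards [Y_ae_Ioo (hmeas j) (hlaw j hj)] with ω hω
    have := hZnn j hj ω hω
    rw [Real.norm_eq_abs, abs_le]
    exact ⟨by linarith [this.1], this.2⟩
  have hZint : ∀ j, 1 ≤ j → Integrable (Z j) ℙ := fun j hj => (hZLp j hj).integrable one_le_two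
  -- mean
  set m : ℕ → ℝ := fun j => ∫ ω', Z j ω' ∂ℙ with hmdef
  have hmean : ∀ j : ℕ, 1 ≤ j → m j
      = (j:ℝ) ^ (α - 1) * (Real.Gamma ((1 - α) + (θ + j * α)) /
          (Real.Gamma (1 - α) * Real.Gamma ((1 - α) + (θ + j * α) + α))) := by
    intro j hj
    have h1 : m j = (∫ ω', Y j ω' ^ α ∂ℙ) * (j:ℝ) ^ (α - 1) := by
      rw [hmdef]
      exact integral_mul_const _ _
    rw [h1, Y_rpow_integral (hmeas j) (hlaw j hj) h1α (hbpos j hj) α hα0.le,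
      show (1 - α) + α = (1:ℝ) by ring, Real.Gamma_one]
    ring
  -- second moment
  have hsq : ∀ j : ℕ, 1 ≤ j → ∫ ω', (Z j ω') ^ 2 ∂ℙ
      = ((j:ℝ) ^ (α - 1)) ^ 2 * (Real.Gamma ((1 - α) + α * 2) * Real.Gamma ((1 - α) + (θ + j * α))
          / (Real.Gamma (1 - α) * Real.Gamma ((1 - α) + (θ + j * α) + α * 2))) := by
    intro j hj
    have hae : ∀ᵐ ω' ∂ℙ, (Z j ω') ^ 2 = Y j ω' ^ (α * 2) * ((j:ℝ) ^ (α - 1)) ^ 2 := by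
      filter_upwards [Y_ae_Ioo (hmeas j) (hlaw j hj)] with ω' hω'
      have h0 : 0 ≤ Y j ω' := hω'.1.le
      have : Y j ω' ^ (α * 2) = (Y j ω' ^ α) ^ (2:ℕ) := by
        rw [Real.rpow_mul h0]
        norm_cast
      rw [hZdef]
      dsimp only
      rw [mul_pow, this]
    rw [integral_congr_ae hae, integral_mul_const,
      Y_rpow_integral (hmeas j) (hlaw j hj) h1α (hbpos j hj) (α * 2) (by positivity)]
    ring
  -- variance bound
  set Cv : ℝ := Real.Gamma ((1 - α) + α * 2) / Real.Gamma (1 - α) * (1 + α / κ) ^ 2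
      * (κ ^ (-α)) ^ 2 with hCvdef
  have hCv0 : 0 ≤ Cv := by
    have := Real.Gamma_pos_of_pos (show (0:ℝ) < (1 - α) + α * 2 by linarith)
    positivity
  have hvar : ∀ j : ℕ, 1 ≤ j → variance (Z j) ℙ ≤ Cv * (((j:ℝ) ^ 2)⁻¹) := by
    intro j hj
    have hj1 : (1:ℝ) ≤ (j:ℝ) := by exact_mod_cast hj
    have hj0 : (0:ℝ) < (j:ℝ) := by linarith
    set x : ℝ := (1 - α) + (θ + j * α) with hxdef
    have hx0 : 0 < x := hxpos j hj
    have hxj : κ * j ≤ x := hxκj j hj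
    have hxk : κ ≤ x := hxκ j hj
    have hGx := Real.Gamma_pos_of_pos hx0
    have hGxa := Real.Gamma_pos_of_pos (show (0:ℝ) < x + α by linarith)
    have hGx2 := Real.Gamma_pos_of_pos (show (0:ℝ) < x + α * 2 by linarith)
    have hGs := Real.Gamma_pos_of_pos (show (0:ℝ) < (1 - α) + α * 2 by linarith)
    -- bound the Gamma ratio
    have hb1 : Real.Gamma x / Real.Gamma (x + α) ≤ (1 + α / κ) * (κ ^ (-α) * (j:ℝ) ^ (-α)) := by
      refine (ratio_upper hx0 hα0.le hα1.le).trans ?_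
      have e1 : (1:ℝ) + α / x ≤ 1 + α / κ := by
        have : α / x ≤ α / κ := div_le_div_of_nonneg_left hα0.le hκ0 hxk
        linarith
      have e2 : x ^ (-α) ≤ κ ^ (-α) * (j:ℝ) ^ (-α) := by
        rw [← Real.mul_rpow hκ0.le hj0.le]
        exact Real.rpow_le_rpow_of_nonpos (by positivity) hxj (by linarith)
      exact mul_le_mul e1 e2 (Real.rpow_nonneg hx0.le _) (by positivity)
    have hb2 : Real.Gamma (x + α) / Real.Gamma ((x + α) + α)
        ≤ (1 + α / κ) * (κ ^ (-α) * (j:ℝ) ^ (-α)) := by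
      have hxa0 : (0:ℝ) < x + α := by linarith
      refine (ratio_upper hxa0 hα0.le hα1.le).trans ?_
      have e1 : (1:ℝ) + α / (x + α) ≤ 1 + α / κ := by
        have : α / (x + α) ≤ α / κ := div_le_div_of_nonneg_left hα0.le hκ0 (by linarith)
        linarith
      have e2 : (x + α) ^ (-α) ≤ κ ^ (-α) * (j:ℝ) ^ (-α) := by
        rw [← Real.mul_rpow hκ0.le hj0.le]
        exact Real.rpow_le_rpow_of_nonpos (by positivity) (by linarith) (by linarith)
      exact mul_le_mul e1 e2 (Real.rpow_nonneg hxa0.le _) (by positivity)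
    have hsplit : Real.Gamma x / Real.Gamma (x + α * 2)
        = (Real.Gamma x / Real.Gamma (x + α)) * (Real.Gamma (x + α) / Real.Gamma ((x + α) + α)) := by
      rw [show (x + α) + α = x + α * 2 by ring]
      field_simp
    have hratio : Real.Gamma x / Real.Gamma (x + α * 2)
        ≤ ((1 + α / κ) * (κ ^ (-α) * (j:ℝ) ^ (-α))) ^ 2 := by
      rw [hsplit, sq]
      exact mul_le_mul hb1 hb2 (by positivity) (by positivity)
    -- assemble
    have hvle := variance_le_expectation_sq (X := Z j) (μ := ℙ) (hZmeas j).aestronglyMeasurable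
    have hrw : ∫ ω', ((Z j) ^ 2) ω' ∂ℙ = ∫ ω', (Z j ω') ^ 2 ∂ℙ := by
      simp only [Pi.pow_apply]
    rw [hrw, hsq j hj] at hvle
    refine hvle.trans ?_
    have e3 : Real.Gamma ((1 - α) + α * 2) * Real.Gamma x
        / (Real.Gamma (1 - α) * Real.Gamma (x + α * 2))
        = (Real.Gamma ((1 - α) + α * 2) / Real.Gamma (1 - α))
          * (Real.Gamma x / Real.Gamma (x + α * 2)) := by
      field_simp
    rw [e3]
    have e4 : ((j:ℝ) ^ (α - 1)) ^ 2 * ((Real.Gamma ((1 - α) + α * 2) / Real.Gamma (1 - α))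
          * (Real.Gamma x / Real.Gamma (x + α * 2)))
        ≤ ((j:ℝ) ^ (α - 1)) ^ 2 * ((Real.Gamma ((1 - α) + α * 2) / Real.Gamma (1 - α))
          * ((1 + α / κ) * (κ ^ (-α) * (j:ℝ) ^ (-α))) ^ 2) := by
      apply mul_le_mul_of_nonneg_left _ (by positivity)
      apply mul_le_mul_of_nonneg_left hratio (by positivity)
    refine e4.trans (le_of_eq ?_)
    have e5 : (j:ℝ) ^ (α - 1) * (j:ℝ) ^ (-α) = (j:ℝ)⁻¹ := by
      rw [← Real.rpow_add hj0, show α - 1 + -α = (-1:ℝ) by ring, Real.rpow_neg_one]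
    calc ((j:ℝ) ^ (α - 1)) ^ 2 * ((Real.Gamma ((1 - α) + α * 2) / Real.Gamma (1 - α))
          * ((1 + α / κ) * (κ ^ (-α) * (j:ℝ) ^ (-α))) ^ 2)
        = (Real.Gamma ((1 - α) + α * 2) / Real.Gamma (1 - α) * (1 + α / κ) ^ 2 * (κ ^ (-α)) ^ 2)
          * ((j:ℝ) ^ (α - 1) * (j:ℝ) ^ (-α)) ^ 2 := by ring
      _ = Cv * (((j:ℝ) ^ 2)⁻¹) := by rw [e5, hCvdef, inv_pow]
  -- independence of the Z's
  have hindepZ : iIndepFun Z ℙ := by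
    have := hindep.comp (fun j => fun y : ℝ => y ^ α * (j:ℝ) ^ (α - 1))
      (fun j => (measurable_rpow_const' α).mul_const _)
    exact this
  -- mean estimate
  set Cm : ℝ := (α + |θ + 1 - α|) * (κ ^ (-α) * κ⁻¹) / Real.Gamma (1 - α) with hCmdef
  have hmc : ∀ j : ℕ, 1 ≤ j → |m j - Ψ * (j:ℝ)⁻¹| ≤ Cm * (((j:ℝ) ^ 2)⁻¹) := by
    intro j hj
    have hj1 : (1:ℝ) ≤ (j:ℝ) := by exact_mod_cast hj
    have hj0 : (0:ℝ) < (j:ℝ) := by linarith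
    set x : ℝ := (1 - α) + (θ + j * α) with hxdef
    have hx0 : 0 < x := hxpos j hj
    have hxj : κ * j ≤ x := hxκj j hj
    set r : ℝ := Real.Gamma x / Real.Gamma (x + α) with hrdef
    set aj : ℝ := (α * (j:ℝ)) ^ (-α) with hajdef
    have e5 : (j:ℝ) ^ (α - 1) * (j:ℝ) ^ (-α) = (j:ℝ)⁻¹ := by
      rw [← Real.rpow_add hj0, show α - 1 + -α = (-1:ℝ) by ring, Real.rpow_neg_one]
    have hmj : m j = ((j:ℝ) ^ (α - 1) / Real.Gamma (1 - α)) * r := by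
      rw [hmean j hj, hrdef, hxdef]
      field_simp
    have hΨj : Ψ * (j:ℝ)⁻¹ = ((j:ℝ) ^ (α - 1) / Real.Gamma (1 - α)) * aj := by
      rw [hΨdef, hajdef, Real.mul_rpow hα0.le hj0.le]
      calc α ^ (-α) * (Real.Gamma (1 - α))⁻¹ * (j:ℝ)⁻¹
          = α ^ (-α) * (Real.Gamma (1 - α))⁻¹ * ((j:ℝ) ^ (α - 1) * (j:ℝ) ^ (-α)) := by rw [e5]
        _ = ((j:ℝ) ^ (α - 1) / Real.Gamma (1 - α)) * (α ^ (-α) * (j:ℝ) ^ (-α)) := by ring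
    have hra : |r - aj| ≤ (α + |θ + 1 - α|) * ((κ * j) ^ (-α) * (κ * j)⁻¹) := by
      have hκj0 : (0:ℝ) < κ * j := by positivity
      have h1 : |r - x ^ (-α)| ≤ α * ((κ * j) ^ (-α) * (κ * j)⁻¹) := by
        have hlo := ratio_lower hx0 hα0.le hα1.le
        have hhi := ratio_upper hx0 hα0.le hα1.le
        rw [abs_of_nonneg (by rw [hrdef]; linarith)]
        have : r - x ^ (-α) ≤ (α / x) * x ^ (-α) := by
          have : (1 + α / x) * x ^ (-α) = x ^ (-α) + (α / x) * x ^ (-α) := by ring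
          rw [hrdef]
          nlinarith [hhi]
        refine this.trans ?_
        have e1 : α / x ≤ α / (κ * j) := div_le_div_of_nonneg_left hα0.le hκj0 hxj
        have e2 : x ^ (-α) ≤ (κ * j) ^ (-α) :=
          Real.rpow_le_rpow_of_nonpos hκj0 hxj (by linarith)
        calc (α / x) * x ^ (-α) ≤ (α / (κ * j)) * (κ * j) ^ (-α) := by
              apply mul_le_mul e1 e2 (Real.rpow_nonneg hx0.le _) (by positivity)
          _ = α * ((κ * j) ^ (-α) * (κ * j)⁻¹) := by ring
      have h2 : |x ^ (-α) - aj| ≤ |θ + 1 - α| * ((κ * j) ^ (-α) * (κ * j)⁻¹) := by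
        have hd := rpow_neg_diff (m := κ * j) (a := x) (b := α * j) hκj0 hxj
          (by nlinarith) hα0.le hα1.le
        rw [hajdef]
        have e6 : x - α * j = θ + 1 - α := by rw [hxdef]; ring
        calc |x ^ (-α) - (α * (j:ℝ)) ^ (-α)| ≤ (κ * j) ^ (-α) * (κ * j)⁻¹ * |x - α * j| := hd
          _ = |θ + 1 - α| * ((κ * j) ^ (-α) * (κ * j)⁻¹) := by rw [e6]; ring
      calc |r - aj| ≤ |r - x ^ (-α)| + |x ^ (-α) - aj| := abs_sub_le _ _ _
        _ ≤ (α + |θ + 1 - α|) * ((κ * j) ^ (-α) * (κ * j)⁻¹) := by linarith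
    -- combine
    have hc0 : (0:ℝ) < (j:ℝ) ^ (α - 1) / Real.Gamma (1 - α) := by
      have := Real.rpow_pos_of_pos hj0 (α - 1)
      positivity
    calc |m j - Ψ * (j:ℝ)⁻¹| = ((j:ℝ) ^ (α - 1) / Real.Gamma (1 - α)) * |r - aj| := by
          rw [hmj, hΨj, ← mul_sub, abs_mul, abs_of_pos hc0]
      _ ≤ ((j:ℝ) ^ (α - 1) / Real.Gamma (1 - α))
          * ((α + |θ + 1 - α|) * ((κ * j) ^ (-α) * (κ * j)⁻¹)) :=
          mul_le_mul_of_nonneg_left hra hc0.le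
      _ ≤ Cm * (((j:ℝ) ^ 2)⁻¹) := by
          have e7 : (κ * (j:ℝ)) ^ (-α) = κ ^ (-α) * (j:ℝ) ^ (-α) := Real.mul_rpow hκ0.le hj0.le
          have e8 : (κ * (j:ℝ))⁻¹ = κ⁻¹ * (j:ℝ)⁻¹ := by rw [mul_inv]
          have e9 : (j:ℝ) ^ (α - 1) * ((j:ℝ) ^ (-α) * (j:ℝ)⁻¹) = (((j:ℝ) ^ 2)⁻¹) := by
            rw [← mul_assoc, e5, sq, mul_inv]
          apply le_of_eq
          rw [e7, e8, hCmdef]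
          calc ((j:ℝ) ^ (α - 1) / Real.Gamma (1 - α))
                * ((α + |θ + 1 - α|) * (κ ^ (-α) * (j:ℝ) ^ (-α) * (κ⁻¹ * (j:ℝ)⁻¹)))
              = ((α + |θ + 1 - α|) * (κ ^ (-α) * κ⁻¹) / Real.Gamma (1 - α))
                * ((j:ℝ) ^ (α - 1) * ((j:ℝ) ^ (-α) * (j:ℝ)⁻¹)) := by ring
            _ = (α + |θ + 1 - α|) * (κ ^ (-α) * κ⁻¹) / Real.Gamma (1 - α)
                * (((j:ℝ) ^ 2)⁻¹) := by rw [e9]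
    -- subsequence N k = k^8
  set N : ℕ → ℕ := fun k => k ^ 8 with hNdef
  have hNmono : ∀ k, N k ≤ N (k + 1) := fun k => Nat.pow_le_pow_left (Nat.le_succ k) 8
  set U : ℕ → Ω → ℝ := fun k => ∑ j ∈ Finset.Ioc (N k) (N (k + 1)), Z j with hUdef
  have hjIoc : ∀ k (j : ℕ), j ∈ Finset.Ioc (N k) (N (k + 1)) → 1 ≤ j := by
    intro k j hj
    have := (Finset.mem_Ioc.1 hj).1
    omega
  have hULp : ∀ k, MemLp (U k) 2 ℙ :=
    fun k => memLp_finset_sum' _ (fun j hj => hZLp j (hjIoc k j hj))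
  have hUint : ∀ k, ∫ ω', U k ω' ∂ℙ = ∑ j ∈ Finset.Ioc (N k) (N (k + 1)), m j := by
    intro k
    have h0 : ∫ ω', U k ω' ∂ℙ = ∫ ω', ∑ j ∈ Finset.Ioc (N k) (N (k + 1)), Z j ω' ∂ℙ := by
      simp only [hUdef, Finset.sum_apply]
    rw [h0, integral_finset_sum _ (fun j hj => hZint j (hjIoc k j hj))]
  have hUvar : ∀ k, 1 ≤ k → variance (U k) ℙ ≤ Cv * ((N k : ℝ))⁻¹ := by
    intro k hk
    have hNk0 : N k ≠ 0 := by
      simp only [hNdef]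
      exact pow_ne_zero _ (by omega)
    rw [hUdef, IndepFun.variance_sum (fun j hj => hZLp j (hjIoc k j hj))
      (fun i _ j _ hij => hindepZ.indepFun hij)]
    calc ∑ j ∈ Finset.Ioc (N k) (N (k + 1)), variance (Z j) ℙ
        ≤ ∑ j ∈ Finset.Ioc (N k) (N (k + 1)), Cv * (((j:ℝ) ^ 2)⁻¹) :=
          Finset.sum_le_sum (fun j hj => hvar j (hjIoc k j hj))
      _ = Cv * ∑ j ∈ Finset.Ioc (N k) (N (k + 1)), (((j:ℝ) ^ 2)⁻¹) := by rw [Finset.mul_sum]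
      _ ≤ Cv * ((N k : ℝ))⁻¹ := by
          apply mul_le_mul_of_nonneg_left _ hCv0
          refine (sum_Ioc_inv_sq_le_sub hNk0 (hNmono k)).trans ?_
          have : (0:ℝ) ≤ ((N (k+1) : ℝ))⁻¹ := by positivity
          linarith
  -- Chebyshev
  set A : ℕ → Set Ω := fun k => {ω' | (((k:ℝ) ^ 2)⁻¹ : ℝ) ≤ |U k ω' - ∫ x, U k x ∂ℙ|} with hAdef
  have hAk : ∀ k : ℕ, 1 ≤ k → ℙ (A k) ≤ ENNReal.ofReal (Cv * (((k:ℝ) ^ 4)⁻¹)) := by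
    intro k hk
    have hk1 : (1:ℝ) ≤ (k:ℝ) := by exact_mod_cast hk
    have hk0 : (0:ℝ) < (k:ℝ) := by linarith
    have hε : (0:ℝ) < ((k:ℝ) ^ 2)⁻¹ := by positivity
    refine (meas_ge_le_variance_div_sq (hULp k) hε).trans ?_
    apply ENNReal.ofReal_le_ofReal
    have hNcast : ((N k : ℕ) : ℝ) = (k:ℝ) ^ 8 := by
      simp only [hNdef]
      push_cast
      ring
    calc variance (U k) ℙ / (((k:ℝ) ^ 2)⁻¹) ^ 2
        = variance (U k) ℙ * (k:ℝ) ^ 4 := by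
          rw [div_eq_mul_inv, inv_pow, inv_inv, ← pow_mul]
      _ ≤ (Cv * ((N k : ℝ))⁻¹) * (k:ℝ) ^ 4 :=
          mul_le_mul_of_nonneg_right (hUvar k hk) (by positivity)
      _ = Cv * (((k:ℝ) ^ 4)⁻¹) := by
          rw [hNcast]
          field_simp
  -- Borel–Cantelli
  have hBC : ∀ᵐ ω ∂ℙ, ∀ᶠ k in atTop, ω ∉ A (k + 1) := by
    apply MeasureTheory.ae_eventually_notMem
    have hsum : Summable (fun k : ℕ => Cv * ((((k + 1 : ℕ):ℝ)) ^ 4)⁻¹) := by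
      apply Summable.mul_left
      have h4 : Summable (fun n : ℕ => ((n:ℝ) ^ 4)⁻¹) := by
        simpa [one_div] using (Real.summable_one_div_nat_pow (p := 4)).2 (by norm_num)
      exact (summable_nat_add_iff 1).2 h4
    refine ne_top_of_le_ne_top ?_ (ENNReal.tsum_le_tsum fun k => hAk (k + 1) (by omega))
    rw [← ENNReal.ofReal_tsum_of_nonneg (fun k => by positivity) hsum]
    exact ENNReal.ofReal_ne_top
  -- deterministic part: e n := (Σ_{j ≤ n} m j) - Ψ log n converges
  have hHar : Tendsto (fun n : ℕ => (∑ i ∈ Finset.range n, ((i + 1 : ℕ):ℝ)⁻¹) - Real.log n)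
      atTop (𝓝 Real.eulerMascheroniConstant) := by
    have hharm : ∀ n : ℕ, ((harmonic n : ℚ) : ℝ) = ∑ i ∈ Finset.range n, ((i + 1 : ℕ):ℝ)⁻¹ := by
      intro n
      rw [harmonic]
      push_cast
      rfl
    exact Real.tendsto_harmonic_sub_log.congr (fun n => by rw [hharm n])
  have hsummc : Summable (fun i : ℕ => m (i + 1) - Ψ * ((i + 1 : ℕ):ℝ)⁻¹) := by
    apply Summable.of_norm_bounded (g := fun i => Cm * ((((i + 1 : ℕ):ℝ)) ^ 2)⁻¹)
    · apply Summable.mul_left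
      have h2 : Summable (fun n : ℕ => ((n:ℝ) ^ 2)⁻¹) := by
        simpa [one_div] using (Real.summable_one_div_nat_pow (p := 2)).2 (by norm_num)
      exact (summable_nat_add_iff 1).2 h2
    · intro i
      rw [Real.norm_eq_abs]
      exact hmc (i + 1) (by omega)
  have hIocRange : ∀ (f : ℕ → ℝ) (n : ℕ),
      ∑ j ∈ Finset.Ioc 0 n, f j = ∑ i ∈ Finset.range n, f (i + 1) := by
    intro f n
    rw [← Finset.Icc_add_one_left_eq_Ioc, ← Finset.Ico_add_one_right_eq_Icc, Finset.sum_Ico_eq_sum_range]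
    simp [add_comm]
  set e : ℕ → ℝ := fun n => (∑ j ∈ Finset.Ioc 0 n, m j) - Ψ * Real.log n with hedef
  set Le : ℝ := (∑' i, (m (i + 1) - Ψ * ((i + 1 : ℕ):ℝ)⁻¹))
      + Ψ * Real.eulerMascheroniConstant with hLedef
  have he : Tendsto e atTop (𝓝 Le) := by
    have h1 : Tendsto (fun n => ∑ i ∈ Finset.range n, (m (i + 1) - Ψ * ((i + 1 : ℕ):ℝ)⁻¹))
        atTop (𝓝 (∑' i, (m (i + 1) - Ψ * ((i + 1 : ℕ):ℝ)⁻¹))) :=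
      hsummc.hasSum.tendsto_sum_nat
    have h2 : Tendsto (fun n : ℕ =>
          Ψ * ((∑ i ∈ Finset.range n, ((i + 1 : ℕ):ℝ)⁻¹) - Real.log n))
        atTop (𝓝 (Ψ * Real.eulerMascheroniConstant)) := hHar.const_mul Ψ
    rw [hLedef]
    apply (h1.add h2).congr
    intro n
    simp only [hedef]
    rw [hIocRange m n, Finset.sum_sub_distrib, mul_sub, Finset.mul_sum]
    ring
  -- main a.e. statement
  have main : ∀ᵐ ω ∂ℙ, ∃ L, Tendsto
      (fun n : ℕ => Ssum α Y n ω - Ψ * Real.log n) atTop (𝓝 L) := by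
    filter_upwards [hYIoo, hBC] with ω hIoo hbc
    set D : ℕ → ℝ := fun n => Ssum α Y n ω - Ψ * Real.log n with hDdef
    set S' : ℕ → ℝ := fun n => ∑ j ∈ Finset.Ioc 0 n, Z j ω with hS'def
    have hDS : ∀ n, D n = S' n - Ψ * Real.log n := by
      intro n
      simp only [hDdef, hS'def]
      rw [hSsum n ω]
    set T : ℕ → ℝ := fun n => S' n - ∑ j ∈ Finset.Ioc 0 n, m j with hTdef
    set d : ℕ → ℝ := fun k => |U k ω - ∫ x, U k x ∂ℙ| with hddef
    have hTd : ∀ k, dist (T (N k)) (T (N (k + 1))) = d k := by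
      intro k
      have hsplitZ : S' (N k) + (∑ j ∈ Finset.Ioc (N k) (N (k+1)), Z j ω) = S' (N (k+1)) := by
        simp only [hS'def]
        exact Finset.sum_Ioc_consecutive _ (Nat.zero_le _) (hNmono k)
      have hsplitm : (∑ j ∈ Finset.Ioc 0 (N k), m j) + (∑ j ∈ Finset.Ioc (N k) (N (k+1)), m j)
          = ∑ j ∈ Finset.Ioc 0 (N (k+1)), m j :=
        Finset.sum_Ioc_consecutive _ (Nat.zero_le _) (hNmono k)
      have hUω : U k ω = ∑ j ∈ Finset.Ioc (N k) (N (k+1)), Z j ω := by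
        simp only [hUdef, Finset.sum_apply]
      simp only [Real.dist_eq, hddef, hTdef]
      rw [hUint k, hUω, abs_sub_comm]
      congr 1
      linarith [hsplitZ, hsplitm]
    have hdev : ∀ᶠ k in atTop, d k ≤ ((k:ℝ) ^ 2)⁻¹ := by
      obtain ⟨K, hK⟩ := eventually_atTop.1 hbc
      rw [eventually_atTop]
      refine ⟨K + 1, fun k hk => ?_⟩
      have hnot : ω ∉ A k := by
        have hk' : K ≤ k - 1 := by omega
        have h := hK (k - 1) hk'
        have hkk : (k - 1) + 1 = k := by omega
        rwa [hkk] at h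
      simp only [hAdef, Set.mem_setOf_eq, not_le] at hnot
      simp only [hddef]
      exact le_of_lt hnot
    have hsumd : Summable d := by
      obtain ⟨K, hK⟩ := eventually_atTop.1 hdev
      rw [← summable_nat_add_iff K]
      apply Summable.of_norm_bounded (g := fun k : ℕ => (((k + K : ℕ):ℝ) ^ 2)⁻¹)
      · have h2 : Summable (fun n : ℕ => ((n:ℝ) ^ 2)⁻¹) := by
          simpa [one_div] using (Real.summable_one_div_nat_pow (p := 2)).2 (by norm_num)
        exact (summable_nat_add_iff K).2 h2
      · intro k
        have hd0 : 0 ≤ d (k + K) := by simp only [hddef]; positivity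
        rw [Real.norm_eq_abs, abs_of_nonneg hd0]
        exact_mod_cast hK (k + K) (by omega)
    have hcauchy : CauchySeq (fun k => T (N k)) :=
      cauchySeq_of_dist_le_of_summable d (fun k => le_of_eq (hTd k)) hsumd
    obtain ⟨Lt, hLt⟩ := cauchySeq_tendsto_of_complete hcauchy
    have hNT : Tendsto N atTop atTop :=
      tendsto_atTop_mono (fun k => Nat.le_self_pow (by norm_num) k) tendsto_id
    have hDN : Tendsto (fun k => D (N k)) atTop (𝓝 (Lt + Le)) := by
      have hTe : ∀ k, D (N k) = T (N k) + e (N k) := by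
        intro k
        rw [hDS (N k)]
        simp only [hTdef, hedef]
        ring
      exact ((hLt.add (he.comp hNT)).congr (fun k => (hTe k).symm))
    -- monotonicity of S'
    have hmono : Monotone S' := by
      intro n n' hnn'
      simp only [hS'def]
      apply Finset.sum_le_sum_of_subset_of_nonneg (Finset.Ioc_subset_Ioc le_rfl hnn')
      intro j hj _
      have hj1 : 1 ≤ j := (Finset.mem_Ioc.1 hj).1
      exact (hZnn j hj1 ω (hIoo j hj1)).1
    -- key comparison inequality
    have hkey : ∀ mm n MM : ℕ, 1 ≤ mm → mm ≤ n → n ≤ MM →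
        |D n - D mm| ≤ |D MM - D mm| + Ψ * (Real.log MM - Real.log mm) := by
      intro mm n MM h1 h2 h3
      have hm1 : (1:ℝ) ≤ (mm:ℝ) := by exact_mod_cast h1
      have hmr : (mm:ℝ) ≤ (n:ℝ) := by exact_mod_cast h2
      have hnr : (n:ℝ) ≤ (MM:ℝ) := by exact_mod_cast h3
      have hlog1 : Real.log mm ≤ Real.log n := Real.log_le_log (by linarith) hmr
      have hlog2 : Real.log n ≤ Real.log MM := Real.log_le_log (by linarith) hnr
      have hs1 : S' mm ≤ S' n := hmono h2
      have hs2 : S' n ≤ S' MM := hmono h3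
      have ha1 : D MM - D mm ≤ |D MM - D mm| := le_abs_self _
      have ha2 : -(|D MM - D mm|) ≤ D MM - D mm := neg_abs_le _
      have hΨ1 : Ψ * Real.log mm ≤ Ψ * Real.log n := mul_le_mul_of_nonneg_left hlog1 hΨ0.le
      have hΨ2 : Ψ * Real.log n ≤ Ψ * Real.log MM := mul_le_mul_of_nonneg_left hlog2 hΨ0.le
      rw [mul_sub, abs_le]
      constructor
      · linarith [hDS n, hDS mm, hDS MM]
      · linarith [hDS n, hDS mm, hDS MM]
    -- eighth root
    set rt : ℕ → ℕ := fun n => Nat.sqrt (Nat.sqrt (Nat.sqrt n)) with hrtdef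
    have hrt1 : ∀ n, N (rt n) ≤ n := by
      intro n
      have h1 : rt n ^ 2 ≤ Nat.sqrt (Nat.sqrt n) := Nat.sqrt_le' _
      have h2 : (rt n ^ 2) ^ 2 ≤ Nat.sqrt n :=
        le_trans (Nat.pow_le_pow_left h1 2) (Nat.sqrt_le' _)
      have h3 : ((rt n ^ 2) ^ 2) ^ 2 ≤ n :=
        le_trans (Nat.pow_le_pow_left h2 2) (Nat.sqrt_le' _)
      calc N (rt n) = ((rt n ^ 2) ^ 2) ^ 2 := by simp only [hNdef]; ring
        _ ≤ n := h3
    have hrt2 : ∀ n, n < N (rt n + 1) := by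
      intro n
      have a1 : n < (Nat.sqrt n + 1) ^ 2 := Nat.lt_succ_sqrt' n
      have a2 : Nat.sqrt n + 1 ≤ (Nat.sqrt (Nat.sqrt n) + 1) ^ 2 := by
        have := Nat.lt_succ_sqrt' (Nat.sqrt n)
        rw [Nat.succ_eq_add_one] at this
        omega
      have a3 : Nat.sqrt (Nat.sqrt n) + 1 ≤ (rt n + 1) ^ 2 := by
        have := Nat.lt_succ_sqrt' (Nat.sqrt (Nat.sqrt n))
        rw [Nat.succ_eq_add_one] at this
        simp only [hrtdef]
        omega
      calc n < (Nat.sqrt n + 1) ^ 2 := a1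
        _ ≤ ((Nat.sqrt (Nat.sqrt n) + 1) ^ 2) ^ 2 := Nat.pow_le_pow_left a2 2
        _ ≤ (((rt n + 1) ^ 2) ^ 2) ^ 2 := Nat.pow_le_pow_left (Nat.pow_le_pow_left a3 2) 2
        _ = N (rt n + 1) := by simp only [hNdef]; ring
    have hrtT : Tendsto rt atTop atTop := by
      rw [tendsto_atTop_atTop]
      intro b
      refine ⟨N b, fun n hn => ?_⟩
      by_contra hcon
      push_neg at hcon
      have hb : N (rt n + 1) ≤ N b := by
        simp only [hNdef]
        exact Nat.pow_le_pow_left (by omega) 8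
      have := hrt2 n
      omega
    -- log increments tend to 0
    have hlog0 : Tendsto (fun k : ℕ => Real.log (N (k+1)) - Real.log (N k)) atTop (𝓝 0) := by
      have base : Tendsto (fun k : ℕ => Real.log ((k:ℝ) + 1) - Real.log k) atTop (𝓝 0) := by
        have h1 : Tendsto (fun k : ℕ => (1:ℝ) + 1 / k) atTop (𝓝 1) := by
          have := tendsto_one_div_atTop_nhds_zero_nat (𝕜 := ℝ)
          simpa using (tendsto_const_nhds.add this)
        have h2 := (Real.continuousAt_log one_ne_zero).tendsto.comp h1
        rw [Real.log_one] at h2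
        apply h2.congr'
        filter_upwards [eventually_ge_atTop 1] with k hk
        have hk0 : (0:ℝ) < (k:ℝ) := by exact_mod_cast Nat.pos_of_ne_zero (by omega)
        simp only [Function.comp]
        rw [show (1:ℝ) + 1 / (k:ℝ) = ((k:ℝ) + 1) / k by field_simp,
          Real.log_div (by positivity) (ne_of_gt hk0)]
      have heq : (fun k : ℕ => Real.log (N (k+1)) - Real.log (N k))
          =ᶠ[atTop] (fun k : ℕ => (8:ℝ) * (Real.log ((k:ℝ)+1) - Real.log k)) := by
        filter_upwards [eventually_ge_atTop 1] with k hk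
        have hc1 : ((N (k+1) : ℕ) : ℝ) = ((k:ℝ)+1) ^ 8 := by
          simp only [hNdef]; push_cast; ring
        have hc2 : ((N k : ℕ) : ℝ) = ((k:ℝ)) ^ 8 := by
          simp only [hNdef]; push_cast; ring
        rw [hc1, hc2, Real.log_pow, Real.log_pow]
        push_cast
        ring
      exact Tendsto.congr' heq.symm (by simpa using base.const_mul (8:ℝ))
    -- sandwich
    refine ⟨Lt + Le, ?_⟩
    have hDrt : Tendsto (fun n => D (N (rt n))) atTop (𝓝 (Lt + Le)) := hDN.comp hrtT
    have hDrt1 : Tendsto (fun n => D (N (rt n + 1))) atTop (𝓝 (Lt + Le)) :=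
      (hDN.comp (tendsto_add_atTop_nat 1)).comp hrtT
    have habs : Tendsto (fun n => |D n - (Lt + Le)|) atTop (𝓝 0) := by
      apply squeeze_zero' (g := fun n => (|D (N (rt n + 1)) - D (N (rt n))|
          + Ψ * (Real.log (N (rt n + 1)) - Real.log (N (rt n)))) + |D (N (rt n)) - (Lt + Le)|)
      · filter_upwards with n using abs_nonneg _
      · filter_upwards [hrtT.eventually_ge_atTop 1] with n hrtn
        have hmm1 : 1 ≤ N (rt n) := by
          simp only [hNdef]
          exact Nat.one_le_pow _ _ (by omega)
        have h1 := hkey (N (rt n)) n (N (rt n + 1)) hmm1 (hrt1 n) (le_of_lt (hrt2 n))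
        have h2 := abs_sub_le (D n) (D (N (rt n))) (Lt + Le)
        have h3 : |D n - D (N (rt n))| = |D n - D (N (rt n))| := rfl
        have h4 : |D n - D (N (rt n))| ≤ |D (N (rt n + 1)) - D (N (rt n))|
            + Ψ * (Real.log (N (rt n + 1)) - Real.log (N (rt n))) := h1
        linarith
      · have t1 : Tendsto (fun n => |D (N (rt n + 1)) - D (N (rt n))|) atTop (𝓝 0) := by
          have := (hDrt1.sub hDrt).abs
          simpa using this
        have t2 : Tendsto (fun n => Ψ * (Real.log (N (rt n + 1)) - Real.log (N (rt n))))
            atTop (𝓝 0) := by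
          have := (hlog0.comp hrtT).const_mul Ψ
          simpa using this
        have t3 : Tendsto (fun n => |D (N (rt n)) - (Lt + Le)|) atTop (𝓝 0) := by
          have := (hDrt.sub (tendsto_const_nhds (x := Lt + Le))).abs
          simpa using this
        simpa using (t1.add t2).add t3
    rw [tendsto_iff_dist_tendsto_zero]
    simpa [Real.dist_eq] using habs
  -- conclude
  refine ⟨fun ω => limUnder atTop (fun n : ℕ => Ssum α Y n ω - Ψ * Real.log n), ?_⟩
  filter_upwards [main] with ω hω
  obtain ⟨L, hL⟩ := hω
  rwa [hL.limUnder_eq]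
end

section
/- Let α ∈ (0,1), θ > -α, and (V_j) the size-biased pick from PD(α,θ), with Σ_n = Σ_{j=1}^n V_j^α. Then sup_n E[(Σ_n/log n)^2] < ∞; in fact E[Σ_n^2] ≤ C (log n)^2 for a constant C depending only on α, θ and all n ≥ 2. -/
set_option linter.unusedSectionVars false
set_option linter.unusedVariables false
set_option maxHeartbeats 1000000

open MeasureTheory ProbabilityTheory Filter Topology

/-- `V j = Y j ∏_{i<j} (1 - Y i)`, the size-biased pick from `PD(α,θ)` (for `j ≥ 1`). -/
noncomputable def Vpick {Ω : Type*} (Y : ℕ → Ω → ℝ) (j : ℕ) (ω : Ω) : ℝ :=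
  Y j ω * ∏ i ∈ Finset.Icc 1 (j - 1), (1 - Y i ω)

/-- `Σ_n = Σ_{j=1}^n V_j^α`. -/
noncomputable def SigmaSum {Ω : Type*} (α : ℝ) (Y : ℕ → Ω → ℝ) (n : ℕ) (ω : Ω) : ℝ :=
  ∑ j ∈ Finset.Icc 1 n, Vpick Y j ω ^ α

/-! ### Auxiliary material -/

lemma real_betaIntegral {u v : ℝ} (hu : 0 < u) (hv : 0 < v) :
    ∫ x in Set.Ioo (0:ℝ) 1, x ^ (u-1) * (1-x) ^ (v-1) =
      Real.Gamma u * Real.Gamma v / Real.Gamma (u+v) := by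
  have key := Complex.Gamma_mul_Gamma_eq_betaIntegral (s := (u:ℂ)) (t := (v:ℂ))
    (by simpa using hu) (by simpa using hv)
  have h1 : Complex.betaIntegral u v =
      ((∫ x in Set.Ioo (0:ℝ) 1, x ^ (u-1) * (1-x) ^ (v-1) : ℝ) : ℂ) := by
    rw [Complex.betaIntegral, intervalIntegral.integral_of_le zero_le_one,
      MeasureTheory.integral_Ioc_eq_integral_Ioo]
    calc ∫ (t : ℝ) in Set.Ioo 0 1, (t:ℂ) ^ ((u:ℂ) - 1) * (1 - (t:ℂ)) ^ ((v:ℂ) - 1)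
        = ∫ (t : ℝ) in Set.Ioo 0 1, ((t ^ (u-1) * (1-t) ^ (v-1) : ℝ) : ℂ) := by
          refine setIntegral_congr_fun measurableSet_Ioo (fun x hx => ?_)
          obtain ⟨hx0, hx1⟩ := hx
          rw [Complex.ofReal_mul, Complex.ofReal_cpow hx0.le,
            Complex.ofReal_cpow (by linarith)]
          push_cast
          ring
      _ = _ := integral_ofReal
  rw [h1, ← Complex.ofReal_add, Complex.Gamma_ofReal, Complex.Gamma_ofReal,
    Complex.Gamma_ofReal, ← Complex.ofReal_mul, ← Complex.ofReal_mul] at key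
  have heq := Complex.ofReal_inj.mp key
  have hG : Real.Gamma (u+v) ≠ 0 := (Real.Gamma_pos_of_pos (by linarith)).ne'
  rw [heq]
  field_simp

lemma betaMeasure_ae_Ioo (a b : ℝ) : ∀ᵐ x ∂(_root_.betaMeasure a b), x ∈ Set.Ioo (0:ℝ) 1 := by
  rw [ae_iff]
  have hset : {x : ℝ | ¬ x ∈ Set.Ioo (0:ℝ) 1} = (Set.Ioo (0:ℝ) 1)ᶜ := rfl
  rw [hset, _root_.betaMeasure, withDensity_apply _ (measurableSet_Ioo.compl),
    Measure.restrict_restrict measurableSet_Ioo.compl]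
  simp

/-- clamped moment function -/
noncomputable def phiFn (s t : ℝ) (x : ℝ) : ℝ :=
  (max 0 (min x 1)) ^ s * (1 - max 0 (min x 1)) ^ t

lemma phiFn_nonneg (s t x : ℝ) : 0 ≤ phiFn s t x := by
  apply mul_nonneg <;> apply Real.rpow_nonneg
  · exact le_max_left _ _
  · simp [max_le_iff, min_le_right]

lemma phiFn_le_one {s t : ℝ} (hs : 0 ≤ s) (ht : 0 ≤ t) (x : ℝ) : phiFn s t x ≤ 1 := by
  have h1 : max 0 (min x 1) ≤ 1 := max_le zero_le_one (min_le_right _ _)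
  have h0 : (0:ℝ) ≤ max 0 (min x 1) := le_max_left _ _
  rw [phiFn]
  exact mul_le_one₀ (Real.rpow_le_one h0 h1 hs) (Real.rpow_nonneg (by linarith) t)
    (Real.rpow_le_one (by linarith) (by linarith) ht)

lemma phiFn_measurable (s t : ℝ) : Measurable (phiFn s t) := by
  unfold phiFn; fun_prop

lemma phiFn_eq {s t x : ℝ} (hx : x ∈ Set.Ioo (0:ℝ) 1) :
    phiFn s t x = x ^ s * (1 - x) ^ t := by
  have : max 0 (min x 1) = x := by
    rw [min_eq_left hx.2.le, max_eq_right hx.1.le]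
  rw [phiFn, this]

lemma betaMeasure_moment {a b s t : ℝ} (ha : 0 < a) (hb : 0 < b) (hs : 0 ≤ s) (ht : 0 ≤ t) :
    ∫ x, phiFn s t x ∂(_root_.betaMeasure a b) =
      Real.Gamma (a+b) / (Real.Gamma a * Real.Gamma b) *
        (Real.Gamma (a+s) * Real.Gamma (b+t) / Real.Gamma (a+s+(b+t))) := by
  set C := Real.Gamma (a+b) / (Real.Gamma a * Real.Gamma b) with hC
  have hmeasD : Measurable fun x : ℝ =>
      (C * x ^ (a - 1) * (1 - x) ^ (b - 1)).toNNReal := by fun_prop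
  have h0 : ∫ x, phiFn s t x ∂(_root_.betaMeasure a b) =
      ∫ x in Set.Ioo (0:ℝ) 1,
        ((C * x ^ (a - 1) * (1 - x) ^ (b - 1)).toNNReal : NNReal) • phiFn s t x := by
    rw [_root_.betaMeasure]
    exact integral_withDensity_eq_integral_smul hmeasD _
  rw [h0]
  have h1 : ∫ x in Set.Ioo (0:ℝ) 1,
        ((C * x ^ (a - 1) * (1 - x) ^ (b - 1)).toNNReal : NNReal) • phiFn s t x
      = ∫ x in Set.Ioo (0:ℝ) 1, C * (x ^ (a + s - 1) * (1-x) ^ (b + t - 1)) := by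
    refine setIntegral_congr_fun measurableSet_Ioo (fun x hx => ?_)
    obtain ⟨hx0, hx1⟩ := hx
    have h1x : (0:ℝ) < 1 - x := by linarith
    have hCpos : 0 ≤ C := by
      apply div_nonneg (Real.Gamma_pos_of_pos (by linarith)).le
      exact (mul_pos (Real.Gamma_pos_of_pos ha) (Real.Gamma_pos_of_pos hb)).le
    have hDnn : 0 ≤ C * x ^ (a - 1) * (1 - x) ^ (b - 1) := by
      apply mul_nonneg (mul_nonneg hCpos (Real.rpow_nonneg hx0.le _)) (Real.rpow_nonneg h1x.le _)
    rw [NNReal.smul_def, Real.coe_toNNReal _ hDnn, smul_eq_mul]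
    rw [phiFn_eq ⟨hx0, hx1⟩]
    rw [show a + s - 1 = (a-1) + s by ring, show b + t - 1 = (b-1) + t by ring,
      Real.rpow_add hx0, Real.rpow_add h1x]
    ring
  rw [h1, MeasureTheory.integral_const_mul,
    show a + s + (b + t) = (a+s) + (b+t) by ring,
    real_betaIntegral (by linarith) (by linarith)]

lemma tele_prod (f : ℕ → ℝ) (m n : ℕ) (hmn : m ≤ n)
    (hf : ∀ k, m + 1 ≤ k → k ≤ n + 1 → f k ≠ 0) :
    ∏ k ∈ Finset.Ioc m n, (f (k+1) / f k) = f (n+1) / f (m+1) := by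
  induction n, hmn using Nat.le_induction with
  | base => simp [div_self (hf (m+1) le_rfl le_rfl)]
  | succ n hmn ih =>
      rw [Finset.prod_Ioc_succ_top (by omega)]
      rw [ih (fun k hk1 hk2 => hf k hk1 (by omega))]
      rw [div_mul_div_comm]
      have h1 : f (n+1) ≠ 0 := hf (n+1) (by omega) (by omega)
      have h2 : f (m+1) ≠ 0 := hf (m+1) le_rfl (by omega)
      field_simp

lemma prod_split_two (h : ℕ → ℝ) {i j : ℕ} (h1i : 1 ≤ i) (hij : i < j) :
    ∏ k ∈ Finset.Ioc 0 j, h k =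
      ((∏ k ∈ Finset.Ioc 0 (i-1), h k) * h i) * ((∏ k ∈ Finset.Ioc i (j-1), h k) * h j) := by
  rw [← Finset.prod_Ioc_consecutive h (Nat.zero_le i) hij.le]
  have e1 : i = (i-1) + 1 := by omega
  have e2 : j = (j-1) + 1 := by omega
  rw [show (Finset.Ioc 0 i) = Finset.Ioc 0 ((i-1)+1) by rw [← e1],
    Finset.prod_Ioc_succ_top (by omega), ← e1]
  rw [show (Finset.Ioc i j) = Finset.Ioc i ((j-1)+1) by rw [← e2],
    Finset.prod_Ioc_succ_top (by omega), ← e2]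

lemma prod_split_one (h : ℕ → ℝ) {j : ℕ} (h1j : 1 ≤ j) :
    ∏ k ∈ Finset.Ioc 0 j, h k = (∏ k ∈ Finset.Ioc 0 (j-1), h k) * h j := by
  have e2 : j = (j-1) + 1 := by omega
  rw [show (Finset.Ioc 0 j) = Finset.Ioc 0 ((j-1)+1) by rw [← e2],
    Finset.prod_Ioc_succ_top (by omega), ← e2]

lemma factorize {Ω : Type*} [MeasureSpace Ω] [IsProbabilityMeasure (ℙ : Measure Ω)]
    (Y : ℕ → Ω → ℝ) (hmeas : ∀ k, Measurable (Y k))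
    (hind : iIndepFun Y ℙ)
    (F : ℕ → ℝ → ℝ) (hF : ∀ k, Measurable (F k)) (hFnn : ∀ k x, 0 ≤ F k x)
    (s : Finset ℕ) :
    ∫ ω, ∏ k ∈ s, F k (Y k ω) ∂ℙ = ∏ k ∈ s, ∫ ω, F k (Y k ω) ∂ℙ := by
  classical
  induction s using Finset.induction with
  | empty => simp
  | insert i s hi ih =>
      have hg : iIndepFun (fun k => F k ∘ Y k) ℙ :=
        hind.comp _ hF
      have hIF : IndepFun (F i ∘ Y i) (∏ k ∈ s, fun ω => F k (Y k ω)) ℙ := by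
        exact (iIndepFun.indepFun_finset_prod_of_notMem hg
          (fun k => (hF k).comp (hmeas k)) hi).symm
      simp only [Finset.prod_insert hi]
      rw [← ih]
      have := hIF.integral_mul_eq_mul_integral
        (((hF i).comp (hmeas i)).aestronglyMeasurable)
        (by
          have : Measurable (∏ k ∈ s, fun ω => F k (Y k ω)) := by
            rw [Finset.prod_fn]
            exact Finset.measurable_prod s (fun k _ => (hF k).comp (hmeas k))
          exact this.aestronglyMeasurable)
      calc ∫ ω, F i (Y i ω) * ∏ k ∈ s, F k (Y k ω) ∂ℙ
          = ∫ ω, ((F i ∘ Y i) * ∏ k ∈ s, fun ω => F k (Y k ω)) ω ∂ℙ := by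
            congr 1; ext ω; simp [Finset.prod_apply]
        _ = (∫ ω, F i (Y i ω) ∂ℙ) * ∫ ω, (∏ k ∈ s, fun ω => F k (Y k ω)) ω ∂ℙ := this
        _ = (∫ ω, F i (Y i ω) ∂ℙ) * ∫ ω, ∏ k ∈ s, F k (Y k ω) ∂ℙ := by
            congr 1; apply integral_congr_ae; filter_upwards with ω; simp [Finset.prod_apply]

noncomputable def Ffun (α : ℝ) (i j k : ℕ) (x : ℝ) : ℝ :=
  if k = i then (if i = j then phiFn (2*α) 0 x else phiFn α α x)
  else if k = j then phiFn α 0 x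
  else if k < i then phiFn 0 (2*α) x else phiFn 0 α x

lemma pointwise_prod {α : ℝ} (hα0 : 0 < α) (y : ℕ → ℝ)
    (hy : ∀ k, 1 ≤ k → y k ∈ Set.Ioo (0:ℝ) 1) {i j : ℕ} (h1i : 1 ≤ i) (hij : i ≤ j) :
    (y i * ∏ k ∈ Finset.Icc 1 (i-1), (1 - y k)) ^ α *
      ((y j * ∏ k ∈ Finset.Icc 1 (j-1), (1 - y k)) ^ α)
      = ∏ k ∈ Finset.Ioc 0 j, Ffun α i j k (y k) := by
  have h1j : 1 ≤ j := le_trans h1i hij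
  have hy0 : ∀ k, 1 ≤ k → 0 < y k := fun k hk => (hy k hk).1
  have hy1 : ∀ k, 1 ≤ k → y k < 1 := fun k hk => (hy k hk).2
  rw [show Finset.Icc 1 (i-1) = Finset.Ioc 0 (i-1) from Finset.Icc_add_one_left_eq_Ioc 0 (i-1),
    show Finset.Icc 1 (j-1) = Finset.Ioc 0 (j-1) from Finset.Icc_add_one_left_eq_Ioc 0 (j-1)]
  have hVi : (y i * ∏ k ∈ Finset.Ioc 0 (i-1), (1 - y k)) ^ α
      = y i ^ α * ∏ k ∈ Finset.Ioc 0 (i-1), (1 - y k) ^ α := by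
    rw [Real.mul_rpow (hy0 i h1i).le (Finset.prod_nonneg (fun k hk => by
      have : 1 ≤ k := by simp only [Finset.mem_Ioc] at hk; omega
      linarith [hy1 k this]))]
    rw [Real.finset_prod_rpow _ _ (fun k hk => by
      have : 1 ≤ k := by simp only [Finset.mem_Ioc] at hk; omega
      linarith [hy1 k this]) α]
  have hVj : (y j * ∏ k ∈ Finset.Ioc 0 (j-1), (1 - y k)) ^ α
      = y j ^ α * ∏ k ∈ Finset.Ioc 0 (j-1), (1 - y k) ^ α := by
    rw [Real.mul_rpow (hy0 j h1j).le (Finset.prod_nonneg (fun k hk => by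
      have : 1 ≤ k := by simp only [Finset.mem_Ioc] at hk; omega
      linarith [hy1 k this]))]
    rw [Real.finset_prod_rpow _ _ (fun k hk => by
      have : 1 ≤ k := by simp only [Finset.mem_Ioc] at hk; omega
      linarith [hy1 k this]) α]
  rw [hVi, hVj]
  rcases eq_or_lt_of_le hij with heq | hlt
  · subst heq
    rw [prod_split_one (fun k => Ffun α i i k (y k)) h1i]
    have hFi : Ffun α i i i (y i) = y i ^ (2*α) := by
      rw [Ffun, if_pos rfl, if_pos rfl, phiFn_eq (hy i h1i), Real.rpow_zero, mul_one]
    have hFk : ∀ k ∈ Finset.Ioc 0 (i-1), Ffun α i i k (y k) = (1 - y k) ^ (2*α) := by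
      intro k hk
      simp only [Finset.mem_Ioc] at hk
      have hk1 : 1 ≤ k := by omega
      have hki : k ≠ i := by omega
      have hklt : k < i := by omega
      rw [Ffun, if_neg hki, if_neg hki, if_pos hklt, phiFn_eq (hy k hk1),
        Real.rpow_zero, one_mul]
    rw [Finset.prod_congr rfl hFk, hFi]
    have : ∀ k ∈ Finset.Ioc 0 (i-1), (1 - y k) ^ (2*α) = (1 - y k) ^ α * (1 - y k) ^ α := by
      intro k hk
      simp only [Finset.mem_Ioc] at hk
      have hk1 : 1 ≤ k := by omega
      rw [← Real.rpow_add (by linarith [hy1 k hk1])]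
      ring_nf
    rw [Finset.prod_congr rfl this, Finset.prod_mul_distrib]
    rw [show (2*α) = α + α by ring, Real.rpow_add (hy0 i h1i)]
    ring
  · rw [prod_split_two (fun k => Ffun α i j k (y k)) h1i hlt]
    have hij' : i ≠ j := Nat.ne_of_lt hlt
    have hFi : Ffun α i j i (y i) = y i ^ α * (1 - y i) ^ α := by
      rw [Ffun, if_pos rfl, if_neg hij', phiFn_eq (hy i h1i)]
    have hFj : Ffun α i j j (y j) = y j ^ α := by
      rw [Ffun, if_neg (Ne.symm hij'), if_pos rfl, phiFn_eq (hy j h1j),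
        Real.rpow_zero, mul_one]
    have hFlow : ∀ k ∈ Finset.Ioc 0 (i-1), Ffun α i j k (y k) = (1 - y k) ^ (2*α) := by
      intro k hk
      simp only [Finset.mem_Ioc] at hk
      have hk1 : 1 ≤ k := by omega
      rw [Ffun, if_neg (by omega : ¬ k = i), if_neg (by omega : ¬ k = j),
        if_pos (by omega : k < i), phiFn_eq (hy k hk1), Real.rpow_zero, one_mul]
    have hFmid : ∀ k ∈ Finset.Ioc i (j-1), Ffun α i j k (y k) = (1 - y k) ^ α := by
      intro k hk
      simp only [Finset.mem_Ioc] at hk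
      have hk1 : 1 ≤ k := by omega
      rw [Ffun, if_neg (by omega : ¬ k = i), if_neg (by omega : ¬ k = j),
        if_neg (by omega : ¬ k < i), phiFn_eq (hy k hk1), Real.rpow_zero, one_mul]
    rw [Finset.prod_congr rfl hFlow, Finset.prod_congr rfl hFmid, hFi, hFj]
    have hsplit : ∏ k ∈ Finset.Ioc 0 (j-1), (1 - y k) ^ α
        = ((∏ k ∈ Finset.Ioc 0 (i-1), (1 - y k) ^ α) * (1 - y i) ^ α) *
          ∏ k ∈ Finset.Ioc i (j-1), (1 - y k) ^ α := by
      rw [← Finset.prod_Ioc_consecutive (fun k => (1 - y k) ^ α) (Nat.zero_le i)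
        (by omega : i ≤ j-1)]
      rw [prod_split_one (fun k => (1 - y k) ^ α) h1i]
    rw [hsplit]
    have hmerge : ∀ k ∈ Finset.Ioc 0 (i-1),
        (1 - y k) ^ (2*α) = (1 - y k) ^ α * (1 - y k) ^ α := by
      intro k hk
      simp only [Finset.mem_Ioc] at hk
      have hk1 : 1 ≤ k := by omega
      rw [← Real.rpow_add (by linarith [hy1 k hk1])]
      ring_nf
    rw [Finset.prod_congr rfl hmerge, Finset.prod_mul_distrib]
    ring

private lemma algL2 {x g p pn qn : ℝ} (hg : g ≠ 0) (hp : p ≠ 0) (hqn : qn ≠ 0) :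
    x/(g*p) * (g*pn/qn) = pn*x/(p*qn) := by field_simp
private lemma algL4 {x g p pn qn : ℝ} (hg : g ≠ 0) (hp : p ≠ 0) (hqn : qn ≠ 0) :
    x/(g*p) * (1*pn/qn) = pn*x/(g*p*qn) := by field_simp
private lemma algL5 {x g p gp qn : ℝ} (hg : g ≠ 0) (hp : p ≠ 0) (hqn : qn ≠ 0) :
    x/(g*p) * (gp*p/qn) = gp*x/(g*qn) := by field_simp

noncomputable def Aseq (α θ : ℝ) (k : ℕ) : ℝ := θ + k * α
noncomputable def pseq (α θ : ℝ) (k : ℕ) : ℝ := Real.Gamma (Aseq α θ k)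
noncomputable def qseq (α θ : ℝ) (k : ℕ) : ℝ := Real.Gamma (Aseq α θ k + (1 - α))
noncomputable def fseq (α θ : ℝ) (k : ℕ) : ℝ :=
  pseq α θ k * pseq α θ (k+1) / (qseq α θ k * qseq α θ (k+1))
noncomputable def gseq (α θ : ℝ) (k : ℕ) : ℝ := pseq α θ k / qseq α θ k
noncomputable def CCval (α θ : ℝ) : ℝ :=
  qseq α θ 1 * qseq α θ 2 / (pseq α θ 1 * pseq α θ 2 * Real.Gamma (1-α)^2)
noncomputable def DDval (α θ : ℝ) : ℝ :=
  Real.Gamma (1+α) * (qseq α θ 1 * qseq α θ 2) /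
    (pseq α θ 1 * pseq α θ 2 * Real.Gamma (1-α))

section algebra
variable {α θ : ℝ} (hα : α ∈ Set.Ioo (0:ℝ) 1) (hθ : -α < θ)
include hα hθ

lemma Aseq_pos (k : ℕ) (hk : 1 ≤ k) : 0 < Aseq α θ k := by
  have h1 : (1:ℝ) ≤ k := by exact_mod_cast hk
  unfold Aseq; nlinarith [hα.1, hθ]

lemma Aseq_le_succ (k : ℕ) : Aseq α θ k ≤ Aseq α θ (k+1) := by
  unfold Aseq; push_cast; nlinarith [hα.1]

lemma pseq_pos (k : ℕ) (hk : 1 ≤ k) : 0 < pseq α θ k :=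
  Real.Gamma_pos_of_pos (Aseq_pos hα hθ k hk)

lemma qseq_pos (k : ℕ) (hk : 1 ≤ k) : 0 < qseq α θ k :=
  Real.Gamma_pos_of_pos
    (by have := Aseq_pos hα hθ k hk; have := hα.2; unfold Aseq at *; nlinarith)

lemma qseq_succ (k : ℕ) (hk : 1 ≤ k) :
    qseq α θ (k+1) = Aseq α θ k * pseq α θ k := by
  unfold qseq pseq
  rw [show Aseq α θ (k+1) + (1-α) = Aseq α θ k + 1 by unfold Aseq; push_cast; ring]
  exact Real.Gamma_add_one (Aseq_pos hα hθ k hk).ne'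

lemma Gpos1' : 0 < Real.Gamma (1-α) := Real.Gamma_pos_of_pos (by linarith [hα.2])

lemma fseq_pos (k : ℕ) (hk : 1 ≤ k) : 0 < fseq α θ k := by
  unfold fseq
  exact div_pos (mul_pos (pseq_pos hα hθ k hk) (pseq_pos hα hθ (k+1) (by omega)))
    (mul_pos (qseq_pos hα hθ k hk) (qseq_pos hα hθ (k+1) (by omega)))

lemma gseq_pos (k : ℕ) (hk : 1 ≤ k) : 0 < gseq α θ k :=
  div_pos (pseq_pos hα hθ k hk) (qseq_pos hα hθ k hk)

lemma e3_ratio (k : ℕ) (hk : 1 ≤ k) :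
    (pseq α θ (k+2) * qseq α θ k) / (pseq α θ k * qseq α θ (k+2))
      = fseq α θ (k+1) / fseq α θ k := by
  have p1 := (pseq_pos hα hθ k hk).ne'
  have p2 := (pseq_pos hα hθ (k+1) (by omega)).ne'
  have p3 := (pseq_pos hα hθ (k+2) (by omega)).ne'
  have q1 := (qseq_pos hα hθ k hk).ne'
  have q2 := (qseq_pos hα hθ (k+1) (by omega)).ne'
  have q3 := (qseq_pos hα hθ (k+2) (by omega)).ne'
  rw [fseq, fseq]
  norm_num
  field_simp

lemma e2_ratio (k : ℕ) (hk : 1 ≤ k) :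
    (pseq α θ (k+1) * qseq α θ k) / (pseq α θ k * qseq α θ (k+1))
      = gseq α θ (k+1) / gseq α θ k := by
  have p1 := (pseq_pos hα hθ k hk).ne'
  have p2 := (pseq_pos hα hθ (k+1) (by omega)).ne'
  have q1 := (qseq_pos hα hθ k hk).ne'
  have q2 := (qseq_pos hα hθ (k+1) (by omega)).ne'
  rw [gseq, gseq]
  field_simp

lemma cross_value (i j : ℕ) (hi : 1 ≤ i) (hij : i < j) :
    (fseq α θ i / fseq α θ 1 *
        ((pseq α θ (i+1) * qseq α θ i) / (Real.Gamma (1-α) * pseq α θ i * qseq α θ (i+2)))) *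
      (gseq α θ j / gseq α θ (i+1) *
        (qseq α θ j / (Real.Gamma (1-α) * pseq α θ j * Aseq α θ j)))
      = CCval α θ / (Aseq α θ (i+1) * Aseq α θ j) := by
  have hj : 1 ≤ j := by omega
  have p1 := (pseq_pos hα hθ 1 le_rfl).ne'
  have p2 := (pseq_pos hα hθ 2 (by omega)).ne'
  have pi := (pseq_pos hα hθ i hi).ne'
  have pi1 := (pseq_pos hα hθ (i+1) (by omega)).ne'
  have pj := (pseq_pos hα hθ j hj).ne'
  have q1 := (qseq_pos hα hθ 1 le_rfl).ne'
  have q2 := (qseq_pos hα hθ 2 (by omega)).ne'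
  have qi := (qseq_pos hα hθ i hi).ne'
  have qi1 := (qseq_pos hα hθ (i+1) (by omega)).ne'
  have qj := (qseq_pos hα hθ j hj).ne'
  have hAi1 := (Aseq_pos hα hθ (i+1) (by omega)).ne'
  have hAj := (Aseq_pos hα hθ j hj).ne'
  have hG := (Gpos1' hα hθ).ne'
  rw [qseq_succ hα hθ (i+1) (by omega)]
  rw [fseq, fseq, gseq, gseq, CCval]
  norm_num
  field_simp

lemma diag_value (j : ℕ) (hj : 1 ≤ j) :
    fseq α θ j / fseq α θ 1 *
        (Real.Gamma (1+α) * qseq α θ j / (Real.Gamma (1-α) * qseq α θ (j+2)))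
      = DDval α θ / (Aseq α θ j * Aseq α θ (j+1)) := by
  have p1 := (pseq_pos hα hθ 1 le_rfl).ne'
  have p2 := (pseq_pos hα hθ 2 (by omega)).ne'
  have pj := (pseq_pos hα hθ j hj).ne'
  have pj1 := (pseq_pos hα hθ (j+1) (by omega)).ne'
  have q1 := (qseq_pos hα hθ 1 le_rfl).ne'
  have q2 := (qseq_pos hα hθ 2 (by omega)).ne'
  have qj := (qseq_pos hα hθ j hj).ne'
  have qj1 := (qseq_pos hα hθ (j+1) (by omega)).ne'
  have hAj := (Aseq_pos hα hθ j hj).ne'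
  have hAj1 := (Aseq_pos hα hθ (j+1) (by omega)).ne'
  have hG := (Gpos1' hα hθ).ne'
  rw [show (j+2 : ℕ) = (j+1)+1 from rfl, qseq_succ hα hθ (j+1) (by omega)]
  rw [fseq, fseq, DDval]
  rw [qseq_succ hα hθ j hj]
  norm_num
  field_simp

lemma CCval_pos : 0 < CCval α θ := by
  unfold CCval
  exact div_pos (mul_pos (qseq_pos hα hθ 1 le_rfl) (qseq_pos hα hθ 2 (by omega)))
    (mul_pos (mul_pos (pseq_pos hα hθ 1 le_rfl) (pseq_pos hα hθ 2 (by omega)))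
      (pow_pos (Gpos1' hα hθ) 2))

lemma DDval_pos : 0 < DDval α θ := by
  unfold DDval
  have h1 := Gpos1' hα hθ
  have h2 : 0 < Real.Gamma (1+α) := Real.Gamma_pos_of_pos (by linarith [hα.1])
  exact div_pos (mul_pos h2 (mul_pos (qseq_pos hα hθ 1 le_rfl) (qseq_pos hα hθ 2 (by omega))))
    (mul_pos (mul_pos (pseq_pos hα hθ 1 le_rfl) (pseq_pos hα hθ 2 (by omega))) h1)

end algebra

section evals

variable {α θ : ℝ} (hα : α ∈ Set.Ioo (0:ℝ) 1) (hθ : -α < θ)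
include hα hθ

omit hθ in
lemma Gpos2 : 0 < Real.Gamma (1+α) := Real.Gamma_pos_of_pos (by linarith [hα.1])

lemma Araw (j : ℕ) (hj : 1 ≤ j) : 0 < θ + (j:ℝ) * α := Aseq_pos hα hθ j hj
lemma Praw (j : ℕ) (hj : 1 ≤ j) : 0 < Real.Gamma (θ + (j:ℝ) * α) :=
  Real.Gamma_pos_of_pos (Araw hα hθ j hj)
lemma Qraw (j : ℕ) (hj : 1 ≤ j) : 0 < Real.Gamma (θ + (j:ℝ) * α + (1-α)) := by
  apply Real.Gamma_pos_of_pos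
  have := Araw hα hθ j hj; have := hα.2; linarith

variable {Ω : Type*} [MeasureSpace Ω] [IsProbabilityMeasure (ℙ : Measure Ω)]
  {Y : ℕ → Ω → ℝ}
  (hmeas : ∀ j, Measurable (Y j))
  (hlaw : ∀ j : ℕ, 1 ≤ j → Measure.map (Y j) ℙ = _root_.betaMeasure (1 - α) (θ + j * α))

include hmeas hlaw

lemma moment_transfer (j : ℕ) (hj : 1 ≤ j) {s t : ℝ} (hs : 0 ≤ s) (ht : 0 ≤ t) :
    ∫ ω, phiFn s t (Y j ω) ∂ℙ =
      Real.Gamma ((1-α)+(θ+j*α)) / (Real.Gamma (1-α) * Real.Gamma (θ+j*α)) *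
        (Real.Gamma ((1-α)+s) * Real.Gamma ((θ+j*α)+t) /
          Real.Gamma ((1-α)+s+((θ+j*α)+t))) := by
  have h1 : ∫ ω, phiFn s t (Y j ω) ∂ℙ = ∫ x, phiFn s t x ∂(Measure.map (Y j) ℙ) :=
    (integral_map (hmeas j).aemeasurable (phiFn_measurable s t).aestronglyMeasurable).symm
  rw [h1, hlaw j hj, betaMeasure_moment (by linarith [hα.2])
    (show (0:ℝ) < θ+(j:ℝ)*α from Aseq_pos hα hθ j hj) hs ht]

lemma eval_E1 (j : ℕ) (hj : 1 ≤ j) :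
    ∫ ω, phiFn α 0 (Y j ω) ∂ℙ =
      qseq α θ j / (Real.Gamma (1-α) * pseq α θ j * Aseq α θ j) := by
  rw [moment_transfer hα hθ hmeas hlaw j hj hα.1.le le_rfl]
  rw [show 1-α+α+(θ+(j:ℝ)*α+0) = (θ+(j:ℝ)*α) + 1 by ring,
    Real.Gamma_add_one (Araw hα hθ j hj).ne',
    show θ+(j:ℝ)*α+0 = θ+(j:ℝ)*α by ring,
    show 1-α+α = (1:ℝ) by ring, Real.Gamma_one,
    show 1-α+(θ+(j:ℝ)*α) = θ+(j:ℝ)*α+(1-α) by ring]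
  simp only [qseq, pseq, Aseq]
  have h1 := (Gpos1' hα hθ).ne'
  have h2 := (Praw hα hθ j hj).ne'
  have h3 := (Araw hα hθ j hj).ne'
  field_simp

lemma eval_E2 (j : ℕ) (hj : 1 ≤ j) :
    ∫ ω, phiFn 0 α (Y j ω) ∂ℙ =
      (pseq α θ (j+1) * qseq α θ j) / (pseq α θ j * qseq α θ (j+1)) := by
  rw [moment_transfer hα hθ hmeas hlaw j hj le_rfl hα.1.le]
  rw [show 1-α+0+(θ+(j:ℝ)*α+α) = θ+((j+1:ℕ):ℝ)*α+(1-α) by push_cast; ring,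
    show θ+(j:ℝ)*α+α = θ+((j+1:ℕ):ℝ)*α by push_cast; ring,
    show 1-α+(0:ℝ) = 1-α by ring,
    show 1-α+(θ+(j:ℝ)*α) = θ+(j:ℝ)*α+(1-α) by ring]
  simp only [qseq, pseq, Aseq]
  exact algL2 (Gpos1' hα hθ).ne' (Praw hα hθ j hj).ne' (Qraw hα hθ (j+1) (by omega)).ne'

lemma eval_E3 (j : ℕ) (hj : 1 ≤ j) :
    ∫ ω, phiFn 0 (2*α) (Y j ω) ∂ℙ =
      (pseq α θ (j+2) * qseq α θ j) / (pseq α θ j * qseq α θ (j+2)) := by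
  rw [moment_transfer hα hθ hmeas hlaw j hj le_rfl (by linarith [hα.1])]
  rw [show 1-α+0+(θ+(j:ℝ)*α+2*α) = θ+((j+2:ℕ):ℝ)*α+(1-α) by push_cast; ring,
    show θ+(j:ℝ)*α+2*α = θ+((j+2:ℕ):ℝ)*α by push_cast; ring,
    show 1-α+(0:ℝ) = 1-α by ring,
    show 1-α+(θ+(j:ℝ)*α) = θ+(j:ℝ)*α+(1-α) by ring]
  simp only [qseq, pseq, Aseq]
  exact algL2 (Gpos1' hα hθ).ne' (Praw hα hθ j hj).ne' (Qraw hα hθ (j+2) (by omega)).ne'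

lemma eval_E4 (j : ℕ) (hj : 1 ≤ j) :
    ∫ ω, phiFn α α (Y j ω) ∂ℙ =
      (pseq α θ (j+1) * qseq α θ j) /
        (Real.Gamma (1-α) * pseq α θ j * qseq α θ (j+2)) := by
  rw [moment_transfer hα hθ hmeas hlaw j hj hα.1.le hα.1.le]
  rw [show 1-α+α+(θ+(j:ℝ)*α+α) = θ+((j+2:ℕ):ℝ)*α+(1-α) by push_cast; ring,
    show θ+(j:ℝ)*α+α = θ+((j+1:ℕ):ℝ)*α by push_cast; ring,
    show 1-α+α = (1:ℝ) by ring, Real.Gamma_one,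
    show 1-α+(θ+(j:ℝ)*α) = θ+(j:ℝ)*α+(1-α) by ring]
  simp only [qseq, pseq, Aseq]
  exact algL4 (Gpos1' hα hθ).ne' (Praw hα hθ j hj).ne' (Qraw hα hθ (j+2) (by omega)).ne'

lemma eval_E5 (j : ℕ) (hj : 1 ≤ j) :
    ∫ ω, phiFn (2*α) 0 (Y j ω) ∂ℙ =
      Real.Gamma (1+α) * qseq α θ j / (Real.Gamma (1-α) * qseq α θ (j+2)) := by
  rw [moment_transfer hα hθ hmeas hlaw j hj (by linarith [hα.1]) le_rfl]
  rw [show 1-α+2*α+(θ+(j:ℝ)*α+0) = θ+((j+2:ℕ):ℝ)*α+(1-α) by push_cast; ring,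
    show θ+(j:ℝ)*α+0 = θ+(j:ℝ)*α by ring,
    show 1-α+2*α = 1+α by ring,
    show 1-α+(θ+(j:ℝ)*α) = θ+(j:ℝ)*α+(1-α) by ring]
  simp only [qseq, pseq, Aseq]
  exact algL5 (Gpos1' hα hθ).ne' (Praw hα hθ j hj).ne' (Qraw hα hθ (j+2) (by omega)).ne'

end evals

theorem stmt11 {Ω : Type*} [MeasureSpace Ω] [IsProbabilityMeasure (ℙ : Measure Ω)]
    (α θ : ℝ) (hα : α ∈ Set.Ioo (0:ℝ) 1) (hθ : -α < θ)
    (Y : ℕ → Ω → ℝ) (hY : IsStickBreaking α θ Y) :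
    (∃ B : ℝ, ∀ n : ℕ, ∫ ω, (SigmaSum α Y n ω / Real.log n) ^ 2 ∂ℙ ≤ B) ∧
      ∃ C : ℝ, ∀ n : ℕ, 2 ≤ n →
        ∫ ω, SigmaSum α Y n ω ^ 2 ∂ℙ ≤ C * Real.log n ^ 2 := by
  obtain ⟨hmeas, hind, hlaw⟩ := hY
  have hα0 := hα.1
  have hα1 := hα.2
  -- almost surely all sticks are in (0,1)
  have hgood : ∀ᵐ ω ∂(ℙ : Measure Ω), ∀ k : ℕ, 1 ≤ k → Y k ω ∈ Set.Ioo (0:ℝ) 1 := by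
    rw [MeasureTheory.ae_all_iff]
    intro k
    by_cases hk : 1 ≤ k
    · have h1 : ∀ᵐ x ∂(Measure.map (Y k) ℙ), x ∈ Set.Ioo (0:ℝ) 1 := by
        rw [hlaw k hk]; exact betaMeasure_ae_Ioo _ _
      have h2 := (ae_map_iff (hmeas k).aemeasurable measurableSet_Ioo).mp h1
      filter_upwards [h2] with ω hω _
      exact hω
    · filter_upwards with ω hk1
      omega
  -- properties of Ffun
  have hFmeas : ∀ i j k : ℕ, Measurable (Ffun α i j k) := by
    intro i j k; unfold Ffun; split_ifs <;> exact phiFn_measurable _ _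
  have hFnn : ∀ (i j k : ℕ) (x : ℝ), 0 ≤ Ffun α i j k x := by
    intro i j k x; unfold Ffun; split_ifs <;> exact phiFn_nonneg _ _ _
  have hFle : ∀ (i j k : ℕ) (x : ℝ), Ffun α i j k x ≤ 1 := by
    intro i j k x; unfold Ffun
    split_ifs <;> apply phiFn_le_one <;> linarith
  -- the product random variables
  set Wi : ℕ → ℕ → Ω → ℝ := fun a b ω =>
    ∏ k ∈ Finset.Ioc 0 (max a b), Ffun α (min a b) (max a b) k (Y k ω) with hWi
  have hWnn : ∀ a b ω, 0 ≤ Wi a b ω := by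
    intro a b ω
    exact Finset.prod_nonneg (fun k _ => hFnn _ _ k _)
  have hWle : ∀ a b ω, Wi a b ω ≤ 1 := by
    intro a b ω
    exact Finset.prod_le_one (fun k _ => hFnn _ _ k _) (fun k _ => hFle _ _ k _)
  have hWmeas : ∀ a b, Measurable (Wi a b) := by
    intro a b
    exact Finset.measurable_prod _ (fun k _ => (hFmeas _ _ k).comp (hmeas k))
  have hWint : ∀ a b, Integrable (Wi a b) ℙ := by
    intro a b
    refine Integrable.mono' (integrable_const (1:ℝ)) (hWmeas a b).aestronglyMeasurable ?_
    filter_upwards with ω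
    rw [Real.norm_eq_abs, abs_of_nonneg (hWnn a b ω)]
    exact hWle a b ω
  -- cross moments
  have hcross : ∀ i j : ℕ, 1 ≤ i → i < j →
      ∫ ω, (∏ k ∈ Finset.Ioc 0 j, Ffun α i j k (Y k ω)) ∂ℙ
        = CCval α θ / (Aseq α θ (i+1) * Aseq α θ j) := by
    intro i j h1i hij
    rw [factorize Y hmeas hind (Ffun α i j) (fun k => hFmeas i j k) (fun k x => hFnn i j k x)]
    rw [prod_split_two (fun k => ∫ ω, Ffun α i j k (Y k ω) ∂ℙ) h1i hij]
    have hterm1 : ∀ k ∈ Finset.Ioc 0 (i-1),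
        (∫ ω, Ffun α i j k (Y k ω) ∂ℙ) = fseq α θ (k+1) / fseq α θ k := by
      intro k hk
      simp only [Finset.mem_Ioc] at hk
      have hk1 : 1 ≤ k := hk.1
      have hFe : Ffun α i j k = phiFn 0 (2*α) := by
        funext x
        rw [Ffun, if_neg (by omega : ¬ k = i), if_neg (by omega : ¬ k = j),
          if_pos (by omega : k < i)]
      rw [hFe, eval_E3 hα hθ hmeas hlaw k hk1, e3_ratio hα hθ k hk1]
    have hterm3 : ∀ k ∈ Finset.Ioc i (j-1),
        (∫ ω, Ffun α i j k (Y k ω) ∂ℙ) = gseq α θ (k+1) / gseq α θ k := by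
      intro k hk
      simp only [Finset.mem_Ioc] at hk
      have hk1 : 1 ≤ k := by omega
      have hFe : Ffun α i j k = phiFn 0 α := by
        funext x
        rw [Ffun, if_neg (by omega : ¬ k = i), if_neg (by omega : ¬ k = j),
          if_neg (by omega : ¬ k < i)]
      rw [hFe, eval_E2 hα hθ hmeas hlaw k hk1, e2_ratio hα hθ k hk1]
    have hFi : Ffun α i j i = phiFn α α := by
      funext x
      rw [Ffun, if_pos rfl, if_neg (by omega : ¬ i = j)]
    have hFj : Ffun α i j j = phiFn α 0 := by
      funext x
      rw [Ffun, if_neg (by omega : ¬ j = i), if_pos rfl]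
    rw [Finset.prod_congr rfl hterm1, Finset.prod_congr rfl hterm3,
      tele_prod (fseq α θ) 0 (i-1) (Nat.zero_le _)
        (fun k hk1 hk2 => (fseq_pos hα hθ k hk1).ne'),
      tele_prod (gseq α θ) i (j-1) (by omega)
        (fun k hk1 hk2 => (gseq_pos hα hθ k (by omega)).ne'),
      show (i-1)+1 = i by omega, show (j-1)+1 = j by omega,
      show (0:ℕ)+1 = 1 from rfl,
      hFi, hFj, eval_E4 hα hθ hmeas hlaw i h1i, eval_E1 hα hθ hmeas hlaw j (by omega)]
    exact cross_value hα hθ i j h1i hij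
  -- diagonal moments
  have hdiag : ∀ j : ℕ, 1 ≤ j →
      ∫ ω, (∏ k ∈ Finset.Ioc 0 j, Ffun α j j k (Y k ω)) ∂ℙ
        = DDval α θ / (Aseq α θ j * Aseq α θ (j+1)) := by
    intro j hj
    rw [factorize Y hmeas hind (Ffun α j j) (fun k => hFmeas j j k) (fun k x => hFnn j j k x)]
    rw [prod_split_one (fun k => ∫ ω, Ffun α j j k (Y k ω) ∂ℙ) hj]
    have hterm1 : ∀ k ∈ Finset.Ioc 0 (j-1),
        (∫ ω, Ffun α j j k (Y k ω) ∂ℙ) = fseq α θ (k+1) / fseq α θ k := by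
      intro k hk
      simp only [Finset.mem_Ioc] at hk
      have hk1 : 1 ≤ k := hk.1
      have hFe : Ffun α j j k = phiFn 0 (2*α) := by
        funext x
        rw [Ffun, if_neg (by omega : ¬ k = j), if_neg (by omega : ¬ k = j),
          if_pos (by omega : k < j)]
      rw [hFe, eval_E3 hα hθ hmeas hlaw k hk1, e3_ratio hα hθ k hk1]
    have hFj : Ffun α j j j = phiFn (2*α) 0 := by
      funext x
      rw [Ffun, if_pos rfl, if_pos rfl]
    rw [Finset.prod_congr rfl hterm1,
      tele_prod (fseq α θ) 0 (j-1) (Nat.zero_le _)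
        (fun k hk1 hk2 => (fseq_pos hα hθ k hk1).ne'),
      show (j-1)+1 = j by omega, show (0:ℕ)+1 = 1 from rfl,
      hFj, eval_E5 hα hθ hmeas hlaw j hj]
    exact diag_value hα hθ j hj
  -- uniform bound on the integrals of Wi
  set Kc : ℝ := max (CCval α θ) (DDval α θ) with hKc
  have hKcpos : 0 < Kc := lt_max_of_lt_left (CCval_pos hα hθ)
  have hWbound : ∀ a b : ℕ, 1 ≤ a → 1 ≤ b →
      ∫ ω, Wi a b ω ∂ℙ ≤ Kc / (Aseq α θ a * Aseq α θ b) := by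
    intro a b ha hb
    have hAa := Aseq_pos hα hθ a ha
    have hAb := Aseq_pos hα hθ b hb
    rcases le_total a b with hab | hba
    · simp only [hWi, min_eq_left hab, max_eq_right hab]
      rcases eq_or_lt_of_le hab with heq | hlt
      · subst heq
        rw [hdiag a ha]
        apply div_le_div₀ hKcpos.le (le_max_right _ _) (mul_pos hAa hAa)
        exact mul_le_mul_of_nonneg_left (Aseq_le_succ hα hθ a) hAa.le
      · rw [hcross a b ha hlt]
        apply div_le_div₀ hKcpos.le (le_max_left _ _) (mul_pos hAa hAb)
        exact mul_le_mul_of_nonneg_right (Aseq_le_succ hα hθ a) hAb.le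
    · simp only [hWi, min_eq_right hba, max_eq_left hba]
      rcases eq_or_lt_of_le hba with heq | hlt
      · subst heq
        rw [hdiag b hb]
        apply div_le_div₀ hKcpos.le (le_max_right _ _) (mul_pos hAb hAb)
        exact mul_le_mul_of_nonneg_left (Aseq_le_succ hα hθ b) hAb.le
      · rw [hcross b a hb hlt, mul_comm (Aseq α θ a) (Aseq α θ b)]
        apply div_le_div₀ hKcpos.le (le_max_left _ _) (mul_pos hAb hAa)
        exact mul_le_mul_of_nonneg_right (Aseq_le_succ hα hθ b) hAa.le
  -- a.e. identity between products of Vpick-powers and Wi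
  have hae : ∀ᵐ ω ∂(ℙ : Measure Ω), ∀ a b : ℕ, 1 ≤ a → 1 ≤ b →
      Vpick Y a ω ^ α * Vpick Y b ω ^ α = Wi a b ω := by
    filter_upwards [hgood] with ω hω
    intro a b ha hb
    rcases le_total a b with hab | hba
    · simp only [hWi, min_eq_left hab, max_eq_right hab]
      exact pointwise_prod hα.1 (fun k => Y k ω) (fun k hk => hω k hk) ha hab
    · simp only [hWi, min_eq_right hba, max_eq_left hba]
      rw [mul_comm]
      exact pointwise_prod hα.1 (fun k => Y k ω) (fun k hk => hω k hk) hb hba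
  -- expansion of the second moment
  have hexp : ∀ n : ℕ, ∫ ω, SigmaSum α Y n ω ^ 2 ∂ℙ
      = ∑ a ∈ Finset.Icc 1 n, ∑ b ∈ Finset.Icc 1 n, ∫ ω, Wi a b ω ∂ℙ := by
    intro n
    rw [MeasureTheory.integral_congr_ae
      (g := fun ω => ∑ a ∈ Finset.Icc 1 n, ∑ b ∈ Finset.Icc 1 n, Wi a b ω) ?_]
    · rw [MeasureTheory.integral_finset_sum _
        (fun a _ => integrable_finset_sum _ (fun b _ => hWint a b))]
      exact Finset.sum_congr rfl (fun a _ => integral_finset_sum _ (fun b _ => hWint a b))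
    · filter_upwards [hae] with ω hω
      rw [SigmaSum, pow_two, Finset.sum_mul_sum]
      exact Finset.sum_congr rfl fun a hamem => Finset.sum_congr rfl fun b hbmem =>
        hω a b (Finset.mem_Icc.mp hamem).1 (Finset.mem_Icc.mp hbmem).1
  -- harmonic-type bound
  set m : ℝ := min α (θ+α) with hm
  have hmpos : 0 < m := lt_min hα.1 (by linarith)
  set L : ℝ := (1/m) * (1 + 1/Real.log 2) with hL
  have hlog2 : 0 < Real.log 2 := Real.log_pos (by norm_num)
  have hLpos : 0 < L := by
    apply mul_pos (by positivity)
    have : 0 < 1/Real.log 2 := by positivity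
    linarith
  have hsum : ∀ n : ℕ, 2 ≤ n →
      ∑ j ∈ Finset.Icc 1 n, 1 / Aseq α θ j ≤ L * Real.log n := by
    intro n hn
    have hstep : ∀ j ∈ Finset.Icc 1 n, 1 / Aseq α θ j ≤ (1/m) * (1/(j:ℝ)) := by
      intro j hj
      have hj1 : 1 ≤ j := (Finset.mem_Icc.mp hj).1
      have hj1' : (1:ℝ) ≤ (j:ℝ) := by exact_mod_cast hj1
      have hAj : m * (j:ℝ) ≤ Aseq α θ j := by
        have h1 : m ≤ α := min_le_left _ _
        have h2 : m ≤ θ + α := min_le_right _ _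
        unfold Aseq
        nlinarith
      calc 1 / Aseq α θ j ≤ 1 / (m * (j:ℝ)) :=
            one_div_le_one_div_of_le (by positivity) hAj
        _ = (1/m) * (1/(j:ℝ)) := (one_div_mul_one_div m (j:ℝ)).symm
    have hharm : ∑ j ∈ Finset.Icc 1 n, (1/(j:ℝ)) = ((harmonic n : ℚ) : ℝ) := by
      rw [harmonic_eq_sum_Icc]
      push_cast
      simp [one_div]
    have hlogn : Real.log 2 ≤ Real.log n := by
      apply Real.log_le_log (by norm_num)
      exact_mod_cast hn
    calc ∑ j ∈ Finset.Icc 1 n, 1 / Aseq α θ j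
        ≤ ∑ j ∈ Finset.Icc 1 n, (1/m) * (1/(j:ℝ)) := Finset.sum_le_sum hstep
      _ = (1/m) * ∑ j ∈ Finset.Icc 1 n, (1/(j:ℝ)) := (Finset.mul_sum _ _ _).symm
      _ = (1/m) * ((harmonic n : ℚ) : ℝ) := by rw [hharm]
      _ ≤ (1/m) * (1 + Real.log n) := by
          apply mul_le_mul_of_nonneg_left (harmonic_le_one_add_log n) (by positivity)
      _ ≤ L * Real.log n := by
          rw [hL]
          have h2 : 1 ≤ (1/Real.log 2) * Real.log n := by
            rw [one_div, inv_mul_eq_div, le_div_iff₀ hlog2]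
            linarith
          have h3 : (0:ℝ) < 1/m := by positivity
          have h4 : 0 ≤ Real.log n := by linarith
          nlinarith
  -- the main estimate
  have hSnn : ∀ n : ℕ, 0 ≤ ∑ j ∈ Finset.Icc 1 n, 1 / Aseq α θ j := by
    intro n
    apply Finset.sum_nonneg
    intro j hj
    have := Aseq_pos hα hθ j (Finset.mem_Icc.mp hj).1
    positivity
  have hmain : ∀ n : ℕ, 2 ≤ n →
      ∫ ω, SigmaSum α Y n ω ^ 2 ∂ℙ ≤ (Kc * L^2) * Real.log n ^ 2 := by
    intro n hn
    rw [hexp n]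
    have hstep1 : ∑ a ∈ Finset.Icc 1 n, ∑ b ∈ Finset.Icc 1 n, ∫ ω, Wi a b ω ∂ℙ
        ≤ ∑ a ∈ Finset.Icc 1 n, ∑ b ∈ Finset.Icc 1 n,
            Kc * ((1 / Aseq α θ a) * (1 / Aseq α θ b)) := by
      apply Finset.sum_le_sum
      intro a ha
      apply Finset.sum_le_sum
      intro b hb
      have h := hWbound a b (Finset.mem_Icc.mp ha).1 (Finset.mem_Icc.mp hb).1
      calc ∫ ω, Wi a b ω ∂ℙ ≤ Kc / (Aseq α θ a * Aseq α θ b) := h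
        _ = Kc * ((1 / Aseq α θ a) * (1 / Aseq α θ b)) := by
            rw [one_div, one_div, div_eq_mul_inv, mul_inv]
    have hstep2 : ∑ a ∈ Finset.Icc 1 n, ∑ b ∈ Finset.Icc 1 n,
          Kc * ((1 / Aseq α θ a) * (1 / Aseq α θ b))
        = Kc * (∑ j ∈ Finset.Icc 1 n, 1 / Aseq α θ j)^2 := by
      rw [pow_two, Finset.sum_mul_sum, Finset.mul_sum]
      apply Finset.sum_congr rfl
      intro a _
      rw [Finset.mul_sum]
    have hstep3 : (∑ j ∈ Finset.Icc 1 n, 1 / Aseq α θ j)^2 ≤ (L * Real.log n)^2 :=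
      pow_le_pow_left₀ (hSnn n) (hsum n hn) 2
    calc ∑ a ∈ Finset.Icc 1 n, ∑ b ∈ Finset.Icc 1 n, ∫ ω, Wi a b ω ∂ℙ
        ≤ Kc * (∑ j ∈ Finset.Icc 1 n, 1 / Aseq α θ j)^2 := by rw [← hstep2]; exact hstep1
      _ ≤ Kc * (L * Real.log n)^2 := mul_le_mul_of_nonneg_left hstep3 hKcpos.le
      _ = (Kc * L^2) * Real.log n ^ 2 := by ring
  refine ⟨⟨max (Kc * L^2) 0, ?_⟩, ⟨Kc * L^2, hmain⟩⟩
  intro n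
  rcases lt_or_ge n 2 with hn | hn
  · have hlogn : Real.log n = 0 := by
      interval_cases n
      · simp
      · simp
    rw [hlogn]
    simp only [div_zero]
    rw [zero_pow (by norm_num : (2:ℕ) ≠ 0)]
    simp only [integral_zero]
    exact le_max_right _ _
  · have hlogpos : 0 < Real.log n := by
      apply Real.log_pos
      exact_mod_cast Nat.lt_of_lt_of_le Nat.one_lt_two hn
    have heq : ∫ ω, (SigmaSum α Y n ω / Real.log n) ^ 2 ∂ℙ
        = (∫ ω, SigmaSum α Y n ω ^ 2 ∂ℙ) / Real.log n ^ 2 := by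
      rw [← integral_div]
      apply integral_congr_ae
      filter_upwards with ω
      rw [div_pow]
    rw [heq]
    apply le_trans _ (le_max_left _ _)
    rw [div_le_iff₀ (by positivity)]
    exact hmain n hn
end
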